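/- arXiv:1710.00244 — 14 statements merged into one kernel-verified Lean document; each statement's English description precedes it below -/
import Mathlib

section
/- If n is a positive integer and S is a set of (n-1)^2 + 1 points in the plane ℝ², then S contains n points that can be ordered so that both their x-coordinates and their y-coordinates form monotone sequences. -/
open Function Finset

theorem my_erdos_szekeres {α : Type*} [LinearOrder α] {r s n : ℕ} {f : Fin n → α}
    (hn : r * s < n) (hf : Injective f) :
    (∃ t : Finset (Fin n), r < #t ∧ StrictMonoOn f ↑t) ∨
      ∃ t : Finset (Fin n), s < #t ∧ StrictAntiOn f ↑t := by
  -- Given an index `i`, produce the set of increasing (resp., decreasing) subsequences which ends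
  -- at `i`.
  let inc_sequences_ending_in : Fin n → Finset (Finset (Fin n)) := fun i =>
    univ.powerset.filter fun t => Finset.max t = i ∧ StrictMonoOn f ↑t
  let dec_sequences_ending_in : Fin n → Finset (Finset (Fin n)) := fun i =>
    univ.powerset.filter fun t => Finset.max t = i ∧ StrictAntiOn f ↑t
  -- The singleton sequence is in both of the above collections.
  -- (This is useful to show that the maximum length subsequence is at least 1, and that the set
  -- of subsequences is nonempty.)
  have inc_i : ∀ i, {i} ∈ inc_sequences_ending_in i := fun i => by
    simp [inc_sequences_ending_in, StrictMonoOn]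
  have dec_i : ∀ i, {i} ∈ dec_sequences_ending_in i := fun i => by
    simp [dec_sequences_ending_in, StrictAntiOn]
  -- Define the pair of labels: at index `i`, the pair is the maximum length of an increasing
  -- subsequence ending at `i`, paired with the maximum length of a decreasing subsequence ending
  -- at `i`.
  -- We call these labels `(a_i, b_i)`.
  let ab' : Fin n → ℕ × ℕ := by
    intro i
    apply
      (max' ((inc_sequences_ending_in i).image card) (Nonempty.image ⟨{i}, inc_i i⟩ _),
        max' ((dec_sequences_ending_in i).image card) (Nonempty.image ⟨{i}, dec_i i⟩ _))
  -- Porting note: it costs many resources to unfold `ab'` so we obscure the definition: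
  generalize hab : ab' = ab
  -- It now suffices to show that one of the labels is 'big' somewhere. In particular, if the
  -- first in the pair is more than `r` somewhere, then we have an increasing subsequence in our
  -- set, and if the second is more than `s` somewhere, then we have a decreasing subsequence.
  rsuffices ⟨i, hi⟩ : ∃ i, r < (ab i).1 ∨ s < (ab i).2
  · refine Or.imp ?_ ?_ hi
    on_goal 1 =>
      have : (ab i).1 ∈ image card (inc_sequences_ending_in i) := by
        simp only [← hab]; exact max'_mem _ (Nonempty.image ⟨{i}, inc_i i⟩ _)
    on_goal 2 =>
      have : (ab i).2 ∈ image card (dec_sequences_ending_in i) := by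
        simp only [← hab]; exact max'_mem _ (Nonempty.image ⟨{i}, dec_i i⟩ _)
    all_goals
      intro hi
      rw [mem_image] at this
      obtain ⟨t, ht₁, ht₂⟩ := this
      refine ⟨t, by rwa [ht₂], ?_⟩
      rw [mem_filter] at ht₁
      apply ht₁.2.2
  -- Show first that the pair of labels is unique.
  have : Injective ab := by
    simp only [← hab]
    apply Injective.of_lt_imp_ne
    intro i j k q
    injection q with q₁ q₂
    -- We have two cases: `f i < f j` or `f j < f i`.
    -- In the former we'll show `a_i < a_j`, and in the latter we'll show `b_i < b_j`.
    cases lt_or_gt_of_ne fun _ => ne_of_lt ‹i < j› (hf ‹f i = f j›)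
    on_goal 1 =>
      apply ne_of_lt _ q₁
      have : (ab' i).1 ∈ image card (inc_sequences_ending_in i) := by exact max'_mem _ (Nonempty.image ⟨{i}, inc_i i⟩ _)
    on_goal 2 =>
      apply ne_of_lt _ q₂
      have : (ab' i).2 ∈ image card (dec_sequences_ending_in i) := by exact max'_mem _ (Nonempty.image ⟨{i}, dec_i i⟩ _)
    all_goals
      -- Reduce to showing there is a subsequence of length `a_i + 1` which ends at `j`.
      rw [Nat.lt_iff_add_one_le]
      apply le_max'
      rw [mem_image] at this ⊢
      -- In particular we take the subsequence `t` of length `a_i` which ends at `i`, by definition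
      -- of `a_i`
      rcases this with ⟨t, ht₁, ht₂⟩
      rw [mem_filter] at ht₁
      -- Ensure `t` ends at `i`.
      have : t.max = i := by simp only [ht₁.2.1]
      -- Now our new subsequence is given by adding `j` at the end of `t`.
      refine ⟨insert j t, ?_, ?_⟩
      -- First make sure it's valid, i.e., that this subsequence ends at `j` and is increasing
      · rw [mem_filter]
        refine ⟨?_, ?_, ?_⟩
        · rw [mem_powerset]; apply subset_univ
        -- It ends at `j` since `i < j`.
        · convert max_insert (a := j) (s := t)
          rw [ht₁.2.1, max_eq_left]
          apply WithBot.coe_le_coe.mpr (le_of_lt ‹i < j›)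
        -- To show it's increasing (i.e., `f` is monotone increasing on `t.insert j`), we do cases
        -- on what the possibilities could be - either in `t` or equals `j`.
        simp only [StrictMonoOn, StrictAntiOn, coe_insert, Set.mem_insert_iff, mem_coe]
        -- Most of the cases are just bashes.
        rintro x ⟨rfl | _⟩ y ⟨rfl | _⟩ _
        · apply (irrefl _ ‹j < j›).elim
        · exfalso
          apply not_le_of_gt (_root_.trans ‹i < j› ‹j < y›) (le_max_of_eq ‹y ∈ t› ‹t.max = i›)
        · first
          | apply lt_of_le_of_lt _ ‹f i < f j›
          | apply lt_of_lt_of_le ‹f j < f i› _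
          rcases lt_or_eq_of_le (le_max_of_eq ‹x ∈ t› ‹t.max = i›) with (_ | rfl)
          · apply le_of_lt (ht₁.2.2 ‹x ∈ t› (mem_of_max ‹t.max = i›) ‹x < i›)
          · rfl
        · apply ht₁.2.2 ‹x ∈ t› ‹y ∈ t› ‹x < y›
      -- Finally show that this new subsequence is one longer than the old one.
      · rw [card_insert_of_notMem, ht₂]
        intro
        apply not_le_of_gt ‹i < j› (le_max_of_eq ‹j ∈ t› ‹t.max = i›)
  -- Finished both goals!
  -- Now that we have uniqueness of each label, it remains to do some counting to finish off.
  -- Suppose all the labels are small.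
  by_contra! q
  -- Then the labels `(a_i, b_i)` all fit in the following set: `{ (x,y) | 1 ≤ x ≤ r, 1 ≤ y ≤ s }`
  let ran : Finset (ℕ × ℕ) := (range r).image Nat.succ ×ˢ (range s).image Nat.succ
  -- which we prove here.
  have : image ab univ ⊆ ran := by
    -- First some logical shuffling
    rintro ⟨x₁, x₂⟩
    simp only [ran, mem_image, exists_prop, mem_range, mem_univ, mem_product, true_and,
      Prod.ext_iff]
    rintro ⟨i, rfl, rfl⟩
    specialize q i
    -- Show `1 ≤ a_i` and `1 ≤ b_i`, which is easy from the fact that `{i}` is an increasing and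
    -- decreasing subsequence which we did right near the top.
    have z : 1 ≤ (ab i).1 ∧ 1 ≤ (ab i).2 := by
      simp only [← hab]
      constructor <;>
        · apply le_max'
          rw [mem_image]
          exact ⟨{i}, by solve_by_elim, card_singleton i⟩
    -- Need to get `a_i ≤ r`, here phrased as: there is some `a < r` with `a+1 = a_i`.
    exact ⟨⟨(ab i).1 - 1, by omega⟩, (ab i).2 - 1, by omega⟩
  -- To get our contradiction, it suffices to prove `n ≤ r * s`
  apply not_le_of_gt hn
  -- Which follows from considering the cardinalities of the subset above, since `ab` is injective.
  simpa [ran, Nat.succ_injective, card_image_of_injective, ‹Injective ab›] using card_le_card this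

theorem stmt_2 (n : ℕ) (hn : 1 ≤ n) (S : Finset (ℝ × ℝ))
    (hS : S.card = (n - 1) ^ 2 + 1) :
    ∃ p : Fin n → ℝ × ℝ, Function.Injective p ∧ (∀ i, p i ∈ S) ∧
      (Monotone (fun i => (p i).1) ∨ Antitone (fun i => (p i).1)) ∧
      (Monotone (fun i => (p i).2) ∨ Antitone (fun i => (p i).2)) := by
  set N := (n - 1) ^ 2 + 1 with hN
  -- enumerate S in lexicographic order
  let T : Finset (Lex (ℝ × ℝ)) := S.map (toLex : ℝ × ℝ ≃ Lex (ℝ × ℝ)).toEmbedding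
  have hT : T.card = N := by simp [T, hS]
  let e : Fin N ↪o Lex (ℝ × ℝ) := T.orderEmbOfFin hT
  let f : Fin N → ℝ × ℝ := fun i => ofLex (e i)
  have hfS : ∀ i, f i ∈ S := by
    intro i
    have : e i ∈ T := Finset.orderEmbOfFin_mem T hT i
    simpa [T, f] using this
  have hfinj : Injective f := by
    intro i j hij
    exact e.injective (by simpa [f] using congrArg toLex hij)
  -- x-coordinates are monotone along the enumeration
  have hx : ∀ i j : Fin N, i ≤ j → (f i).1 ≤ (f j).1 := by
    intro i j hij
    have h : e i ≤ e j := e.monotone hij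
    rcases (Prod.Lex.le_iff (x := e i) (y := e j)).mp h with h1 | ⟨h1, _⟩
    · exact le_of_lt h1
    · exact le_of_eq h1
  -- apply Erdős–Szekeres to the swapped-lex values
  let g : Fin N → Lex (ℝ × ℝ) := fun i => toLex ((f i).2, (f i).1)
  have hginj : Injective g := by
    intro i j hij
    apply hfinj
    have h := congrArg ofLex hij
    exact Prod.ext (congrArg Prod.snd h) (congrArg Prod.fst h)
  have hlt : (n - 1) * (n - 1) < N := by rw [hN]; nlinarith [sq_nonneg (n - 1)]
  rcases my_erdos_szekeres (r := n - 1) (s := n - 1) hlt hginj with ⟨t, ht, hmono⟩ | ⟨t, ht, hanti⟩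
  all_goals {
    obtain ⟨u, hut, hu⟩ := Finset.exists_subset_card_eq (s := t) (n := n) (by omega)
    let emb : Fin n ↪o Fin N := u.orderEmbOfFin hu
    have hmem : ∀ i, emb i ∈ t := fun i => hut (Finset.orderEmbOfFin_mem u hu i)
    refine ⟨fun i => f (emb i), fun i j hij => emb.injective (hfinj hij), fun i => hfS _, ?_, ?_⟩
    · left
      exact fun i j hij => hx _ _ (emb.monotone hij)
    · first
      | (left
         intro i j hij
         rcases eq_or_lt_of_le hij with rfl | hij'
         · exact le_rfl
         · have h := hmono (hmem i) (hmem j) (emb.strictMono hij')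
           rcases Prod.Lex.lt_iff.mp h with h1 | ⟨h1, _⟩
           · exact le_of_lt h1
           · exact le_of_eq h1)
      | (right
         intro i j hij
         rcases eq_or_lt_of_le hij with rfl | hij'
         · exact le_rfl
         · have h := hanti (hmem i) (hmem j) (emb.strictMono hij')
           rcases Prod.Lex.lt_iff.mp h with h1 | ⟨h1, _⟩
           · exact le_of_lt h1
           · exact le_of_eq h1) }
end

section
/- If a connected graph G admits a monotone-geodesic labeling, then every general position set of G has at most 4 vertices, i.e., gp(G) ≤ 4. -/
/-- A sequence of three points in ℝ² is monotone: both coordinate sequences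
are monotone. -/
def MonoTriple (a b c : ℝ × ℝ) : Prop :=
  ((a.1 ≤ b.1 ∧ b.1 ≤ c.1) ∨ (c.1 ≤ b.1 ∧ b.1 ≤ a.1)) ∧
  ((a.2 ≤ b.2 ∧ b.2 ≤ c.2) ∨ (c.2 ≤ b.2 ∧ b.2 ≤ a.2))

/-- A monotone-geodesic labeling of a graph. -/
def IsMonGeoLabeling {V : Type*} (G : SimpleGraph V) (f : V → ℝ × ℝ) : Prop :=
  Function.Injective f ∧
    ∀ x y z : V, MonoTriple (f x) (f y) (f z) →
      G.dist x z = G.dist x y + G.dist y z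

/-- General position set. -/
def IsGenPos {V : Type*} (G : SimpleGraph V) (S : Set V) : Prop :=
  ∀ u ∈ S, ∀ v ∈ S, ∀ w ∈ S, u ≠ v → v ≠ w → u ≠ w →
    G.dist u w ≠ G.dist u v + G.dist v w

/-- Three reals form a monotone sequence. -/
def Mono3 (x y z : ℝ) : Prop := (x ≤ y ∧ y ≤ z) ∨ (z ≤ y ∧ y ≤ x)

/-- Erdős–Szekeres type lemma: among any five reals (in order) there is a
monotone subsequence of length three. -/
lemma es5 (a b c d e : ℝ) :
    Mono3 a b c ∨ Mono3 a b d ∨ Mono3 a b e ∨ Mono3 a c d ∨ Mono3 a c e ∨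
    Mono3 a d e ∨ Mono3 b c d ∨ Mono3 b c e ∨ Mono3 b d e ∨ Mono3 c d e := by
  unfold Mono3
  rcases le_total b c with h1|h1
  · rcases le_total a b with h2|h2
    · exact Or.inl (Or.inl ⟨h2, h1⟩)
    rcases le_total c d with h3|h3
    · exact Or.inr (Or.inr (Or.inr (Or.inr (Or.inr (Or.inr (Or.inl (Or.inl ⟨h1, h3⟩)))))))
    rcases le_total d e with h4|h4
    · rcases le_total b d with h5|h5
      · exact Or.inr (Or.inr (Or.inr (Or.inr (Or.inr (Or.inr (Or.inr (Or.inr (Or.inl (Or.inl ⟨h5, h4⟩)))))))))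
      · exact Or.inr (Or.inl (Or.inr ⟨h5, h2⟩))
    · exact Or.inr (Or.inr (Or.inr (Or.inr (Or.inr (Or.inr (Or.inr (Or.inr (Or.inr (Or.inr ⟨h4, h3⟩)))))))))
  · rcases le_total b a with h2|h2
    · exact Or.inl (Or.inr ⟨h1, h2⟩)
    rcases le_total d c with h3|h3
    · exact Or.inr (Or.inr (Or.inr (Or.inr (Or.inr (Or.inr (Or.inl (Or.inr ⟨h3, h1⟩)))))))
    rcases le_total e d with h4|h4
    · rcases le_total d b with h5|h5
      · exact Or.inr (Or.inr (Or.inr (Or.inr (Or.inr (Or.inr (Or.inr (Or.inr (Or.inl (Or.inr ⟨h4, h5⟩)))))))))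
      · exact Or.inr (Or.inl (Or.inl ⟨h2, h5⟩))
    · exact Or.inr (Or.inr (Or.inr (Or.inr (Or.inr (Or.inr (Or.inr (Or.inr (Or.inr (Or.inl ⟨h3, h4⟩)))))))))

/-- Among any five points of the plane there are three distinct indices
forming a monotone triple. -/
lemma mono5 (p : Fin 5 → ℝ × ℝ) :
    ∃ i j k : Fin 5, i ≠ j ∧ j ≠ k ∧ i ≠ k ∧ MonoTriple (p i) (p j) (p k) := by
  classical
  set σ := Tuple.sort (fun i => (p i).1) with hσ
  have hx : Monotone ((fun i => (p i).1) ∘ σ) := Tuple.monotone_sort _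
  set q : Fin 5 → ℝ × ℝ := fun i => p (σ i) with hq
  have hx' : ∀ i j : Fin 5, i ≤ j → (q i).1 ≤ (q j).1 := fun i j h => hx h
  have key : ∀ i j k : Fin 5, i < j → j < k → Mono3 (q i).2 (q j).2 (q k).2 →
      ∃ i j k : Fin 5, i ≠ j ∧ j ≠ k ∧ i ≠ k ∧ MonoTriple (p i) (p j) (p k) := by
    intro i j k hij hjk hm
    refine ⟨σ i, σ j, σ k, ?_, ?_, ?_, ?_⟩
    · exact fun h => absurd (σ.injective h) hij.ne
    · exact fun h => absurd (σ.injective h) hjk.ne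
    · exact fun h => absurd (σ.injective h) (hij.trans hjk).ne
    · exact ⟨Or.inl ⟨hx' _ _ hij.le, hx' _ _ hjk.le⟩, hm⟩
  rcases es5 (q 0).2 (q 1).2 (q 2).2 (q 3).2 (q 4).2 with h|h|h|h|h|h|h|h|h|h
  · exact key 0 1 2 (by decide) (by decide) h
  · exact key 0 1 3 (by decide) (by decide) h
  · exact key 0 1 4 (by decide) (by decide) h
  · exact key 0 2 3 (by decide) (by decide) h
  · exact key 0 2 4 (by decide) (by decide) h
  · exact key 0 3 4 (by decide) (by decide) h
  · exact key 1 2 3 (by decide) (by decide) h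
  · exact key 1 2 4 (by decide) (by decide) h
  · exact key 1 3 4 (by decide) (by decide) h
  · exact key 2 3 4 (by decide) (by decide) h

theorem stmt_3 {V : Type*} (G : SimpleGraph V) (hG : G.Connected)
    (f : V → ℝ × ℝ) (hf : IsMonGeoLabeling G f)
    (S : Set V) (hS : IsGenPos G S) :
    S.Finite ∧ S.ncard ≤ 4 := by
  classical
  have key5 : ∀ v : Fin 5 → V, Function.Injective v → (∀ i, v i ∈ S) → False := by
    intro v hv hvS
    obtain ⟨i, j, k, hij, hjk, hik, hm⟩ := mono5 (fun i => f (v i))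
    exact hS (v i) (hvS i) (v j) (hvS j) (v k) (hvS k)
      (fun h => hij (hv h)) (fun h => hjk (hv h)) (fun h => hik (hv h))
      (hf.2 (v i) (v j) (v k) hm)
  have hfin : S.Finite := by
    by_contra h
    have hinf : S.Infinite := h
    let e := hinf.natEmbedding
    exact key5 (fun i => (e i.val : V))
      (fun i j hij => Fin.val_injective (e.injective (Subtype.val_injective hij)))
      (fun i => (e i.val).2)
  refine ⟨hfin, ?_⟩
  by_contra h
  push_neg at h
  have h5 : 5 ≤ hfin.toFinset.card := by
    rw [Set.ncard_eq_toFinset_card _ hfin] at h; omega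
  obtain ⟨T, hTsub, hTcard⟩ := Finset.exists_subset_card_eq h5
  let eqv := T.equivFin
  have : Function.Injective (fun i : Fin 5 => ((eqv.symm (Fin.cast hTcard.symm i)) : V)) := by
    intro i j hij
    have := eqv.symm.injective (Subtype.val_injective hij)
    have h2 : (i : ℕ) = j := by simpa using congrArg Fin.val this
    exact Fin.ext h2
  exact key5 _ this (fun i => hfin.mem_toFinset.mp (hTsub (eqv.symm (Fin.cast hTcard.symm i)).2))
end

section
/- If a connected graph G admits a monotone-geodesic labeling, then the clique number of G is at most 4. -/
lemma five_aux (y : Fin 5 → ℝ) (h13 : y 1 ≤ y 3) :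
    ∃ i j k : Fin 5, i < j ∧ j < k ∧
      ((y i ≤ y j ∧ y j ≤ y k) ∨ (y k ≤ y j ∧ y j ≤ y i)) := by
  rcases le_total (y 2) (y 3) with h23 | h23
  · rcases le_total (y 1) (y 2) with h12 | h12
    · exact ⟨1, 2, 3, by decide, by decide, Or.inl ⟨h12, h23⟩⟩
    · rcases le_total (y 0) (y 2) with h02 | h02
      · exact ⟨0, 2, 3, by decide, by decide, Or.inl ⟨h02, h23⟩⟩
      · rcases le_total (y 0) (y 1) with h01 | h01
        · exact ⟨0, 1, 3, by decide, by decide, Or.inl ⟨h01, h13⟩⟩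
        · exact ⟨0, 1, 2, by decide, by decide, Or.inr ⟨h12, h01⟩⟩
  · rcases le_total (y 3) (y 4) with h34 | h34
    · exact ⟨1, 3, 4, by decide, by decide, Or.inl ⟨h13, h34⟩⟩
    · exact ⟨2, 3, 4, by decide, by decide, Or.inr ⟨h34, h23⟩⟩

lemma five (y : Fin 5 → ℝ) :
    ∃ i j k : Fin 5, i < j ∧ j < k ∧
      ((y i ≤ y j ∧ y j ≤ y k) ∨ (y k ≤ y j ∧ y j ≤ y i)) := by
  rcases le_total (y 1) (y 3) with h | h
  · exact five_aux y h
  · obtain ⟨i, j, k, hij, hjk, hm⟩ := five_aux (fun i => -(y i)) (by simpa)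
    exact ⟨i, j, k, hij, hjk, by
      rcases hm with ⟨h1, h2⟩ | ⟨h1, h2⟩
      · exact Or.inr ⟨by simpa using h2, by simpa using h1⟩
      · exact Or.inl ⟨by simpa using h2, by simpa using h1⟩⟩

theorem stmt_4 {V : Type*} (G : SimpleGraph V) (hG : G.Connected)
    (f : V → ℝ × ℝ) (hf : IsMonGeoLabeling G f)
    (K : Finset V) (hK : G.IsClique (K : Set V)) :
    K.card ≤ 4 := by
  by_contra hcard
  push_neg at hcard
  obtain ⟨K', hK'sub, hK'card⟩ := Finset.exists_subset_card_eq hcard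
  classical
  -- image in lex order
  set S : Finset (ℝ ×ₗ ℝ) := K'.image (fun v => toLex (f v)) with hS
  have hinj : Function.Injective (fun v => toLex (f v)) :=
    fun a b hab => hf.1 (by simpa using hab)
  have hScard : S.card = 5 := by
    rw [hS, Finset.card_image_of_injective _ hinj, hK'card]
  let m := S.orderIsoOfFin hScard
  -- each point comes from a vertex of K'
  have hmem : ∀ i : Fin 5, (m i : ℝ ×ₗ ℝ) ∈ S := fun i => (m i).2
  have hvert : ∀ i : Fin 5, ∃ v ∈ K', toLex (f v) = (m i : ℝ ×ₗ ℝ) := by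
    intro i
    have h := hmem i
    simp only [hS, Finset.mem_image] at h
    exact h
  choose v hvK hvf using hvert
  have hvinj : Function.Injective v := by
    intro i j hij
    apply m.injective
    apply Subtype.ext
    rw [← hvf i, ← hvf j, hij]
  -- monotone x-coordinates
  have hx : ∀ i j : Fin 5, i ≤ j → (ofLex (m i : ℝ ×ₗ ℝ)).1 ≤ (ofLex (m j : ℝ ×ₗ ℝ)).1 := by
    intro i j hij
    have h := m.monotone hij
    have h' : (m i : ℝ ×ₗ ℝ) ≤ (m j : ℝ ×ₗ ℝ) := h
    rcases Prod.Lex.le_iff.mp h' with h1 | ⟨h1, _⟩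
    · exact le_of_lt h1
    · exact le_of_eq h1
  obtain ⟨i, j, k, hij, hjk, hmono⟩ := five (fun i => (ofLex (m i : ℝ ×ₗ ℝ)).2)
  have hMT : MonoTriple (f (v i)) (f (v j)) (f (v k)) := by
    have hfi : f (v i) = ofLex (m i : ℝ ×ₗ ℝ) := by rw [← hvf i]; rfl
    have hfj : f (v j) = ofLex (m j : ℝ ×ₗ ℝ) := by rw [← hvf j]; rfl
    have hfk : f (v k) = ofLex (m k : ℝ ×ₗ ℝ) := by rw [← hvf k]; rfl
    rw [hfi, hfj, hfk]
    exact ⟨Or.inl ⟨hx i j hij.le, hx j k hjk.le⟩, hmono⟩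
  -- clique distances
  have hij' : v i ≠ v j := fun h => (ne_of_lt hij) (hvinj h)
  have hjk' : v j ≠ v k := fun h => (ne_of_lt hjk) (hvinj h)
  have hik' : v i ≠ v k := fun h => (ne_of_lt (hij.trans hjk)) (hvinj h)
  have memK : ∀ l : Fin 5, v l ∈ (K : Set V) := fun l => hK'sub (hvK l)
  have adj_ij : G.Adj (v i) (v j) := hK (memK i) (memK j) hij'
  have adj_jk : G.Adj (v j) (v k) := hK (memK j) (memK k) hjk'
  have adj_ik : G.Adj (v i) (v k) := hK (memK i) (memK k) hik'
  have d_ij : G.dist (v i) (v j) = 1 := SimpleGraph.dist_eq_one_iff_adj.mpr adj_ij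
  have d_jk : G.dist (v j) (v k) = 1 := SimpleGraph.dist_eq_one_iff_adj.mpr adj_jk
  have d_ik : G.dist (v i) (v k) = 1 := SimpleGraph.dist_eq_one_iff_adj.mpr adj_ik
  have := hf.2 (v i) (v j) (v k) hMT
  rw [d_ij, d_jk, d_ik] at this
  omega
end

section
/- The general position number of the infinite 2-dimensional grid P_∞ □ P_∞ (the graph on ℤ² with edges between points at L¹-distance 1) equals 4. -/
/-- Graph distance in the infinite 2-dim grid on ℤ² (L¹ distance). -/
def gridDist (p q : ℤ × ℤ) : ℕ := (p.1 - q.1).natAbs + (p.2 - q.2).natAbs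

/-- General position set with respect to a distance function. -/
def IsGenPosDist {V : Type*} (d : V → V → ℕ) (S : Set V) : Prop :=
  ∀ u ∈ S, ∀ v ∈ S, ∀ w ∈ S, u ≠ v → v ≠ w → u ≠ w →
    d u w ≠ d u v + d v w

lemma dist_eq_of_btw (u v w : ℤ × ℤ)
    (hx : (u.1 ≤ v.1 ∧ v.1 ≤ w.1) ∨ (w.1 ≤ v.1 ∧ v.1 ≤ u.1))
    (hy : (u.2 ≤ v.2 ∧ v.2 ≤ w.2) ∨ (w.2 ≤ v.2 ∧ v.2 ≤ u.2)) :
    gridDist u w = gridDist u v + gridDist v w := by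
  simp only [gridDist]; omega

lemma ne2 {u v : ℤ × ℤ} (h : u.2 ≠ v.2) : u ≠ v := fun e => h (congrArg Prod.snd e)

lemma btw_contra {S : Set (ℤ × ℤ)} (h : IsGenPosDist gridDist S) {u v w : ℤ × ℤ}
    (hu : u ∈ S) (hv : v ∈ S) (hw : w ∈ S)
    (h1 : u ≠ v) (h2 : v ≠ w) (h3 : u ≠ w)
    (hx : (u.1 ≤ v.1 ∧ v.1 ≤ w.1) ∨ (w.1 ≤ v.1 ∧ v.1 ≤ u.1))
    (hy : (u.2 ≤ v.2 ∧ v.2 ≤ w.2) ∨ (w.2 ≤ v.2 ∧ v.2 ≤ u.2)) : False :=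
  h u hu v hv w hw h1 h2 h3 (dist_eq_of_btw u v w hx hy)

/-- two points `r,s` strictly above both `a` and `e`, with x between: contradiction. -/
lemma samesideUp {S : Set (ℤ × ℤ)} (h : IsGenPosDist gridDist S) {a r s e : ℤ × ℤ}
    (ma : a ∈ S) (mr : r ∈ S) (ms : s ∈ S) (me : e ∈ S) (hrs : r ≠ s)
    (x1 : a.1 ≤ r.1) (x2 : a.1 ≤ s.1) (x3 : r.1 ≤ e.1) (x4 : s.1 ≤ e.1)
    (y1 : a.2 < r.2) (y2 : e.2 < r.2) (y3 : a.2 < s.2) (y4 : e.2 < s.2) : False := by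
  rcases le_total r.1 s.1 with h1 | h1
  · rcases le_total r.2 s.2 with h2 | h2
    · exact btw_contra h ma mr ms (ne2 (by omega)) hrs (ne2 (by omega))
        (Or.inl ⟨x1, h1⟩) (Or.inl ⟨by omega, h2⟩)
    · exact btw_contra h mr ms me hrs (ne2 (by omega)) (ne2 (by omega))
        (Or.inl ⟨h1, x4⟩) (Or.inr ⟨by omega, h2⟩)
  · rcases le_total s.2 r.2 with h2 | h2
    · exact btw_contra h ma ms mr (ne2 (by omega)) hrs.symm (ne2 (by omega))
        (Or.inl ⟨x2, h1⟩) (Or.inl ⟨by omega, h2⟩)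
    · exact btw_contra h ms mr me hrs.symm (ne2 (by omega)) (ne2 (by omega))
        (Or.inl ⟨h1, x3⟩) (Or.inr ⟨by omega, h2⟩)

/-- two points `r,s` strictly below both `a` and `e`, with x between: contradiction. -/
lemma samesideDown {S : Set (ℤ × ℤ)} (h : IsGenPosDist gridDist S) {a r s e : ℤ × ℤ}
    (ma : a ∈ S) (mr : r ∈ S) (ms : s ∈ S) (me : e ∈ S) (hrs : r ≠ s)
    (x1 : a.1 ≤ r.1) (x2 : a.1 ≤ s.1) (x3 : r.1 ≤ e.1) (x4 : s.1 ≤ e.1)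
    (y1 : r.2 < a.2) (y2 : r.2 < e.2) (y3 : s.2 < a.2) (y4 : s.2 < e.2) : False := by
  rcases le_total r.1 s.1 with h1 | h1
  · rcases le_total s.2 r.2 with h2 | h2
    · exact btw_contra h ma mr ms (ne2 (by omega)) hrs (ne2 (by omega))
        (Or.inl ⟨x1, h1⟩) (Or.inr ⟨h2, by omega⟩)
    · exact btw_contra h mr ms me hrs (ne2 (by omega)) (ne2 (by omega))
        (Or.inl ⟨h1, x4⟩) (Or.inl ⟨h2, by omega⟩)
  · rcases le_total r.2 s.2 with h2 | h2
    · exact btw_contra h ma ms mr (ne2 (by omega)) hrs.symm (ne2 (by omega))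
        (Or.inl ⟨x2, h1⟩) (Or.inr ⟨h2, by omega⟩)
    · exact btw_contra h ms mr me hrs.symm (ne2 (by omega)) (ne2 (by omega))
        (Or.inl ⟨h1, x3⟩) (Or.inl ⟨h2, by omega⟩)

/-- five distinct points with `a` minimal and `e` maximal in `x`: contradiction. -/
lemma core5 {S : Set (ℤ × ℤ)} (h : IsGenPosDist gridDist S) {a b c d e : ℤ × ℤ}
    (ma : a ∈ S) (mb : b ∈ S) (mc : c ∈ S) (md : d ∈ S) (me : e ∈ S)
    (nab : a ≠ b) (nac : a ≠ c) (nad : a ≠ d) (nae : a ≠ e)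
    (nbc : b ≠ c) (nbd : b ≠ d) (nbe : b ≠ e) (ncd : c ≠ d) (nce : c ≠ e) (nde : d ≠ e)
    (xb : a.1 ≤ b.1) (xc : a.1 ≤ c.1) (xd : a.1 ≤ d.1)
    (xb' : b.1 ≤ e.1) (xc' : c.1 ≤ e.1) (xd' : d.1 ≤ e.1) : False := by
  have hB : (a.2 < b.2 ∧ e.2 < b.2) ∨ (b.2 < a.2 ∧ b.2 < e.2) := by
    by_contra hcon
    exact h a ma b mb e me nab nbe nae (dist_eq_of_btw a b e (Or.inl ⟨xb, xb'⟩) (by omega))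
  have hC : (a.2 < c.2 ∧ e.2 < c.2) ∨ (c.2 < a.2 ∧ c.2 < e.2) := by
    by_contra hcon
    exact h a ma c mc e me nac nce nae (dist_eq_of_btw a c e (Or.inl ⟨xc, xc'⟩) (by omega))
  have hD : (a.2 < d.2 ∧ e.2 < d.2) ∨ (d.2 < a.2 ∧ d.2 < e.2) := by
    by_contra hcon
    exact h a ma d md e me nad nde nae (dist_eq_of_btw a d e (Or.inl ⟨xd, xd'⟩) (by omega))
  rcases hB with ⟨b1, b2⟩ | ⟨b1, b2⟩ <;> rcases hC with ⟨c1, c2⟩ | ⟨c1, c2⟩ <;>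
    rcases hD with ⟨d1, d2⟩ | ⟨d1, d2⟩
  · exact samesideUp h ma mb mc me nbc xb xc xb' xc' b1 b2 c1 c2
  · exact samesideUp h ma mb mc me nbc xb xc xb' xc' b1 b2 c1 c2
  · exact samesideUp h ma mb md me nbd xb xd xb' xd' b1 b2 d1 d2
  · exact samesideDown h ma mc md me ncd xc xd xc' xd' c1 c2 d1 d2
  · exact samesideUp h ma mc md me ncd xc xd xc' xd' c1 c2 d1 d2
  · exact samesideDown h ma mb md me nbd xb xd xb' xd' b1 b2 d1 d2
  · exact samesideDown h ma mb mc me nbc xb xc xb' xc' b1 b2 c1 c2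
  · exact samesideDown h ma mb mc me nbc xb xc xb' xc' b1 b2 c1 c2

/-- no general position set contains five distinct points. -/
lemma no_five {S : Set (ℤ × ℤ)} (h : IsGenPosDist gridDist S) (l : List (ℤ × ℤ))
    (hlen : l.length = 5) (hnd : l.Nodup) (hmem : ∀ x ∈ l, x ∈ S) : False := by
  classical
  set le : ℤ × ℤ → ℤ × ℤ → Bool := fun p q => decide (p.1 ≤ q.1) with hle
  have hperm : List.Perm (l.mergeSort le) l := List.mergeSort_perm l le
  have hsort : (l.mergeSort le).Pairwise (fun p q => le p q) :=
    List.pairwise_mergeSort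
      (by intro p q r hpq hqr; simp only [hle, decide_eq_true_eq] at *; omega)
      (by intro p q; simp only [hle]; rcases le_total p.1 q.1 with h1 | h1 <;> simp [h1]) l
  have hnd' : (l.mergeSort le).Nodup := hnd.perm hperm.symm
  have hmem' : ∀ x ∈ l.mergeSort le, x ∈ S := fun x hx => hmem x (hperm.mem_iff.mp hx)
  have hlen' : (l.mergeSort le).length = 5 := hperm.length_eq.trans hlen
  obtain ⟨a, b, c, d, e, heq⟩ : ∃ a b c d e, l.mergeSort le = [a, b, c, d, e] := by
    match hl : l.mergeSort le, hlen' with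
    | [a, b, c, d, e], _ => exact ⟨a, b, c, d, e, rfl⟩
  rw [heq] at hsort hnd' hmem'
  simp only [List.pairwise_cons, List.mem_cons, List.not_mem_nil, or_false, hle,
    decide_eq_true_eq, List.nodup_cons, List.mem_cons, List.mem_singleton,
    List.nodup_nil, and_true, not_or] at hsort hnd'
  have sb := hsort.1 b (Or.inl rfl)
  have sc := hsort.1 c (Or.inr (Or.inl rfl))
  have sd := hsort.1 d (Or.inr (Or.inr (Or.inl rfl)))
  have sb' := hsort.2.1 e (Or.inr (Or.inr rfl))
  have sc' := hsort.2.2.1 e (Or.inr rfl)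
  have sd' := hsort.2.2.2.1 e rfl
  refine core5 h (hmem' a (by simp)) (hmem' b (by simp)) (hmem' c (by simp))
    (hmem' d (by simp)) (hmem' e (by simp))
    hnd'.1.1 hnd'.1.2.1 hnd'.1.2.2.1 hnd'.1.2.2.2
    hnd'.2.1.1 hnd'.2.1.2.1 hnd'.2.1.2.2
    hnd'.2.2.1.1 hnd'.2.2.1.2 hnd'.2.2.2.1
    sb sc sd sb' sc' sd'

/-- gp(P∞ □ P∞) = 4. -/
theorem stmt_6 :
    (∃ S : Finset (ℤ × ℤ), IsGenPosDist gridDist (S : Set (ℤ × ℤ)) ∧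
      S.card = 4) ∧
    (∀ S : Set (ℤ × ℤ), IsGenPosDist gridDist S → S.Finite ∧ S.ncard ≤ 4) := by
  constructor
  · refine ⟨{(0, 1), (1, 3), (2, 0), (3, 2)}, ?_, by decide⟩
    intro u hu v hv w hw h1 h2 h3
    simp only [Finset.coe_insert, Set.mem_insert_iff, Finset.coe_singleton,
      Set.mem_singleton_iff] at hu hv hw
    rcases hu with rfl | rfl | rfl | rfl <;> rcases hv with rfl | rfl | rfl | rfl <;>
      rcases hw with rfl | rfl | rfl | rfl <;> simp_all <;> decide
  · intro S hS
    have key : ∀ T : Set (ℤ × ℤ), T ⊆ S → T.Finite → T.ncard = 5 → False := by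
      intro T hTS hTf hT5
      have hcard : hTf.toFinset.card = 5 := by
        rw [← Set.ncard_eq_toFinset_card T hTf]; exact hT5
      refine no_five hS hTf.toFinset.toList ?_ (Finset.nodup_toList _) ?_
      · rw [Finset.length_toList]; exact hcard
      · intro x hx
        exact hTS (hTf.mem_toFinset.mp ((Finset.mem_toList).mp hx))
    have hfin : S.Finite := by
      by_contra hinf
      obtain ⟨t, hts, htf, ht5⟩ := Set.Infinite.exists_subset_ncard_eq hinf 5
      exact key t hts htf ht5
    refine ⟨hfin, ?_⟩
    by_contra hgt
    obtain ⟨t, hts, ht5⟩ := Set.exists_subset_card_eq (s := S) (n := 5) (by omega)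
    exact key t hts (hfin.subset hts) ht5
end

section
/- In the graph on ℤ² where two points are adjacent iff they differ by at most 1 in each coordinate and are distinct (the strong product P_∞ ⊠ P_∞, i.e., L∞ distance), the labeling g obtained by rotating coordinates by 45 degrees, g(i,j) = (i+j, j-i), is a monotone-geodesic labeling. -/
/-- Graph distance in the infinite diagonal grid (king graph) on ℤ²:
the L∞ (Chebyshev) distance. -/
def kingDist (p q : ℤ × ℤ) : ℕ := max (p.1 - q.1).natAbs (p.2 - q.2).natAbs

/-- The 45°-rotated labeling. -/
def rotLabel (p : ℤ × ℤ) : ℤ × ℤ := (p.1 + p.2, p.2 - p.1)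

/-- The rotated labeling is monotone-geodesic for the diagonal grid: if the
labels of three vertices are monotone in both coordinates, the vertices lie
on a common geodesic. -/
theorem stmt_7 (u v w : ℤ × ℤ)
    (hx : ((rotLabel u).1 ≤ (rotLabel v).1 ∧ (rotLabel v).1 ≤ (rotLabel w).1) ∨
          ((rotLabel w).1 ≤ (rotLabel v).1 ∧ (rotLabel v).1 ≤ (rotLabel u).1))
    (hy : ((rotLabel u).2 ≤ (rotLabel v).2 ∧ (rotLabel v).2 ≤ (rotLabel w).2) ∨
          ((rotLabel w).2 ≤ (rotLabel v).2 ∧ (rotLabel v).2 ≤ (rotLabel u).2)) :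
    kingDist u w = kingDist u v + kingDist v w := by
  simp only [kingDist, rotLabel] at *
  omega
end

section
/- The general position number of the infinite 2-dimensional diagonal grid (the graph on ℤ² with distance given by the L∞ metric, i.e., the strong product of two two-way infinite paths) equals 4. -/
private lemma king_betw_x {w u v : ℤ × ℤ} (h1 : (w.2 - u.2).natAbs ≤ (w.1 - u.1).natAbs)
    (h2 : (u.2 - v.2).natAbs ≤ (u.1 - v.1).natAbs)
    (ha : w.1 < u.1) (hb : u.1 < v.1) :
    kingDist w v = kingDist w u + kingDist u v := by
  unfold kingDist; omega

private lemma king_betw_y {w u v : ℤ × ℤ} (h1 : (w.1 - u.1).natAbs ≤ (w.2 - u.2).natAbs)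
    (h2 : (u.1 - v.1).natAbs ≤ (u.2 - v.2).natAbs)
    (ha : w.2 < u.2) (hb : u.2 < v.2) :
    kingDist w v = kingDist w u + kingDist u v := by
  unfold kingDist; omega

private lemma keyX {S : Set (ℤ × ℤ)} (h : IsGenPosDist kingDist S)
    {T : Finset (ℤ × ℤ)} (hT : ↑T ⊆ S) {u v : ℤ × ℤ} (hu : u ∈ T) (hv : v ∈ T)
    (hxy : (u.2 - v.2).natAbs ≤ (u.1 - v.1).natAbs) (hlt : u.1 < v.1)
    (hc : (∃ p ∈ T, (p.2 - u.2).natAbs ≤ (p.1 - u.1).natAbs ∧ p.1 < u.1) ↔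
          (∃ p ∈ T, (p.2 - v.2).natAbs ≤ (p.1 - v.1).natAbs ∧ p.1 < v.1)) : False := by
  obtain ⟨w, hwT, hw1, hw2⟩ : ∃ p ∈ T, (p.2 - u.2).natAbs ≤ (p.1 - u.1).natAbs ∧ p.1 < u.1 :=
    hc.mpr ⟨u, hu, hxy, hlt⟩
  have hne1 : w ≠ u := fun e => by rw [e] at hw2; omega
  have hne2 : u ≠ v := fun e => by rw [e] at hlt; omega
  have hne3 : w ≠ v := fun e => by rw [e] at hw2; omega
  exact h w (hT hwT) u (hT hu) v (hT hv) hne1 hne2 hne3 (king_betw_x hw1 hxy hw2 hlt)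

private lemma keyY {S : Set (ℤ × ℤ)} (h : IsGenPosDist kingDist S)
    {T : Finset (ℤ × ℤ)} (hT : ↑T ⊆ S) {u v : ℤ × ℤ} (hu : u ∈ T) (hv : v ∈ T)
    (hxy : (u.1 - v.1).natAbs ≤ (u.2 - v.2).natAbs) (hlt : u.2 < v.2)
    (hc : (∃ p ∈ T, (p.1 - u.1).natAbs ≤ (p.2 - u.2).natAbs ∧ p.2 < u.2) ↔
          (∃ p ∈ T, (p.1 - v.1).natAbs ≤ (p.2 - v.2).natAbs ∧ p.2 < v.2)) : False := by
  obtain ⟨w, hwT, hw1, hw2⟩ : ∃ p ∈ T, (p.1 - u.1).natAbs ≤ (p.2 - u.2).natAbs ∧ p.2 < u.2 :=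
    hc.mpr ⟨u, hu, hxy, hlt⟩
  have hne1 : w ≠ u := fun e => by rw [e] at hw2; omega
  have hne2 : u ≠ v := fun e => by rw [e] at hlt; omega
  have hne3 : w ≠ v := fun e => by rw [e] at hw2; omega
  exact h w (hT hwT) u (hT hu) v (hT hv) hne1 hne2 hne3 (king_betw_y hw1 hxy hw2 hlt)

private lemma no_five_s8 {S : Set (ℤ × ℤ)} (h : IsGenPosDist kingDist S)
    {T : Finset (ℤ × ℤ)} (hT : ↑T ⊆ S) (hcard : T.card = 5) : False := by
  classical
  set f : ℤ × ℤ → Bool × Bool := fun v =>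
    (decide (∃ p ∈ T, (p.2 - v.2).natAbs ≤ (p.1 - v.1).natAbs ∧ p.1 < v.1),
     decide (∃ p ∈ T, (p.1 - v.1).natAbs ≤ (p.2 - v.2).natAbs ∧ p.2 < v.2)) with hf
  have hcard' : (Finset.univ : Finset (Bool × Bool)).card < T.card := by
    simp [hcard]
  obtain ⟨u, hu, v, hv, huv, hfe⟩ :=
    Finset.exists_ne_map_eq_of_card_lt_of_maps_to hcard'
      (fun a _ => Finset.mem_univ (f a))
  have hfx : (∃ p ∈ T, (p.2 - u.2).natAbs ≤ (p.1 - u.1).natAbs ∧ p.1 < u.1) ↔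
      (∃ p ∈ T, (p.2 - v.2).natAbs ≤ (p.1 - v.1).natAbs ∧ p.1 < v.1) := by
    have := congrArg Prod.fst hfe
    simp only [hf] at this
    constructor <;> intro hh <;> [skip; skip] <;>
      · first
        | (exact of_decide_eq_true (this ▸ decide_eq_true hh))
        | (exact of_decide_eq_true (this.symm ▸ decide_eq_true hh))
  have hfy : (∃ p ∈ T, (p.1 - u.1).natAbs ≤ (p.2 - u.2).natAbs ∧ p.2 < u.2) ↔
      (∃ p ∈ T, (p.1 - v.1).natAbs ≤ (p.2 - v.2).natAbs ∧ p.2 < v.2) := by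
    have := congrArg Prod.snd hfe
    simp only [hf] at this
    constructor <;> intro hh <;>
      · first
        | (exact of_decide_eq_true (this ▸ decide_eq_true hh))
        | (exact of_decide_eq_true (this.symm ▸ decide_eq_true hh))
  rcases le_total (u.2 - v.2).natAbs (u.1 - v.1).natAbs with hx | hy
  · have hne : u.1 ≠ v.1 := by
      intro e
      apply huv
      have : (u.2 - v.2).natAbs = 0 := by omega
      exact Prod.ext e (by omega)
    rcases lt_or_gt_of_ne hne with hlt | hlt
    · exact keyX h hT hu hv hx hlt hfx
    · refine keyX h hT hv hu (by omega) hlt hfx.symm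
  · have hne : u.2 ≠ v.2 := by
      intro e
      apply huv
      have : (u.1 - v.1).natAbs = 0 := by omega
      exact Prod.ext (by omega) e
    rcases lt_or_gt_of_ne hne with hlt | hlt
    · exact keyY h hT hu hv hy hlt hfy
    · refine keyY h hT hv hu (by omega) hlt hfy.symm

/-- gp(P∞ ⊠ P∞) = 4. -/
theorem stmt_8 :
    (∃ S : Finset (ℤ × ℤ), IsGenPosDist kingDist (S : Set (ℤ × ℤ)) ∧
      S.card = 4) ∧
    (∀ S : Set (ℤ × ℤ), IsGenPosDist kingDist S → S.Finite ∧ S.ncard ≤ 4) := by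
  constructor
  · refine ⟨{(0, 0), (0, 1), (1, 0), (1, 1)}, ?_, by decide⟩
    intro u hu v hv w hw h1 h2 h3
    simp only [Finset.coe_insert, Set.mem_insert_iff, Finset.coe_singleton,
      Set.mem_singleton_iff] at hu hv hw
    rcases hu with rfl | rfl | rfl | rfl <;> rcases hv with rfl | rfl | rfl | rfl <;>
      rcases hw with rfl | rfl | rfl | rfl <;> simp_all [kingDist] <;> decide
  · intro S hS
    have hfin : S.Finite := by
      by_contra hinf
      obtain ⟨T, hTs, hTc⟩ := Set.Infinite.exists_subset_card_eq hinf 5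
      exact no_five_s8 hS hTs hTc
    refine ⟨hfin, ?_⟩
    by_contra hcard
    push_neg at hcard
    obtain ⟨T, hTs, hTc⟩ := Finset.exists_subset_card_eq
      (by rw [← Set.ncard_eq_toFinset_card _ hfin]; omega : 5 ≤ hfin.toFinset.card)
    refine no_five_s8 hS (fun x hx => ?_) hTc
    exact hfin.mem_toFinset.mp (hTs hx)
end

section
/- Let G be a connected graph and S a set of vertices. If there exists a positive integer k such that k ≤ d(x,y) < 2k holds for every pair of distinct vertices x, y ∈ S, then S is a general position set of G. -/
theorem stmt_9 {V : Type*} (G : SimpleGraph V) (hG : G.Connected)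
    (S : Set V) (k : ℕ) (hk : 0 < k)
    (h : ∀ x ∈ S, ∀ y ∈ S, x ≠ y → k ≤ G.dist x y ∧ G.dist x y < 2 * k) :
    IsGenPos G S := by
  intro u hu v hv w hw huv hvw huw
  obtain ⟨h1, h2⟩ := h u hu v hv huv
  obtain ⟨h3, h4⟩ := h v hv w hw hvw
  obtain ⟨h5, h6⟩ := h u hu w hw huw
  omega
end

section
/- In the infinite 3-dimensional grid graph on ℤ³ (graph distance = L¹ distance), the 10-point set S = {(2,2,0), (3,1,1), (1,3,1), (2,0,2), (0,2,2), (4,2,2), (2,4,2), (1,1,3), (3,3,3), (2,2,4)} satisfies 3 ≤ d(x,y) ≤ 5 for all distinct x, y ∈ S, and hence S is a general position set; consequently gp(P_∞^{□,3}) ≥ 10. -/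
/-- Graph distance in the infinite 3-dim grid on ℤ³ (L¹ distance). -/
def grid3Dist (p q : ℤ × ℤ × ℤ) : ℕ :=
  (p.1 - q.1).natAbs + (p.2.1 - q.2.1).natAbs + (p.2.2 - q.2.2).natAbs

/-- The explicit 10-point set in ℤ³. -/
def S10 : Finset (ℤ × ℤ × ℤ) :=
  {(2,2,0), (3,1,1), (1,3,1), (2,0,2), (0,2,2),
   (4,2,2), (2,4,2), (1,1,3), (3,3,3), (2,2,4)}

theorem stmt_10 :
    (∀ x ∈ S10, ∀ y ∈ S10, x ≠ y →
        3 ≤ grid3Dist x y ∧ grid3Dist x y ≤ 5) ∧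
    IsGenPosDist grid3Dist (S10 : Set (ℤ × ℤ × ℤ)) ∧
    S10.card = 10 := by
  have key : ∀ x ∈ S10, ∀ y ∈ S10, x ≠ y →
      3 ≤ grid3Dist x y ∧ grid3Dist x y ≤ 5 := by decide
  refine ⟨key, ?_, by decide⟩
  intro u hu v hv w hw huv hvw huw heq
  have h1 := key u hu v hv huv
  have h2 := key v hv w hw hvw
  have h3 := key u hu w hw huw
  omega
end

section
/- Every set of 17 points in ℤ³ contains three distinct points that lie on a common geodesic of the 3-dimensional grid graph; hence the general position number of the infinite 3-dimensional grid on ℤ³ is at most 16. -/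
variable {α : Type*} [LinearOrder α]

def upLen (f : ℕ → α) (i : ℕ) : ℕ :=
  (((Finset.range i).filter (fun j => f j ≤ f i)).attach.sup
    (fun j => upLen f j.1)) + 1
termination_by i
decreasing_by
  have := j.2
  simp only [Finset.mem_filter, Finset.mem_range] at this
  exact this.1

lemma upLen_pos (f : ℕ → α) (i : ℕ) : 1 ≤ upLen f i := by
  rw [upLen]; omega

lemma upLen_lt (f : ℕ → α) {i j : ℕ} (h : i < j) (hf : f i ≤ f j) :
    upLen f i < upLen f j := by
  conv_rhs => rw [upLen]
  have hm : i ∈ (Finset.range j).filter (fun k => f k ≤ f j) := by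
    simp [Finset.mem_filter, Finset.mem_range, h, hf]
  have := Finset.le_sup (f := fun k : {x // x ∈ (Finset.range j).filter (fun k => f k ≤ f j)} => upLen f k.1)
    (Finset.mem_attach _ ⟨i, hm⟩)
  dsimp only at this
  omega

lemma upLen_pred (f : ℕ → α) {i : ℕ} (h : 2 ≤ upLen f i) :
    ∃ j < i, f j ≤ f i ∧ upLen f j + 1 = upLen f i := by
  rw [upLen] at h
  set s := ((Finset.range i).filter (fun j => f j ≤ f i)).attach with hs
  have hne : s.Nonempty := by
    rw [Finset.attach_nonempty_iff]
    by_contra hc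
    rw [Finset.not_nonempty_iff_eq_empty] at hc
    rw [hs, hc] at h
    simp at h
  obtain ⟨j, hj, hsup⟩ := Finset.exists_mem_eq_sup s hne (fun j => upLen f j.1)
  have hj2 := j.2
  simp only [Finset.mem_filter, Finset.mem_range] at hj2
  refine ⟨j.1, hj2.1, hj2.2, ?_⟩
  conv_rhs => rw [upLen]
  rw [← hs, ← hsup]

lemma exists_chain (f : ℕ → α) : ∀ k i, k + 1 ≤ upLen f i →
    ∃ l : List ℕ, l.length = k + 1 ∧ l.Chain' (· < ·) ∧
      l.Chain' (fun a b => f a ≤ f b) ∧ (∀ x ∈ l, x ≤ i) ∧ l.getLast? = some i := by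
  intro k
  induction k with
  | zero => intro i _; exact ⟨[i], rfl, List.isChain_singleton _, List.isChain_singleton _, by simp, rfl⟩
  | succ k ih =>
    intro i h
    obtain ⟨j, hji, hfj, hlen⟩ := upLen_pred f (i := i) (by omega)
    obtain ⟨l, hl1, hl2, hl3, hl4, hl5⟩ := ih j (by omega)
    refine ⟨l ++ [i], by simp [hl1], ?_, ?_, ?_, ?_⟩
    · simp only [List.Chain']; rw [List.isChain_append]
      refine ⟨hl2, by simp, ?_⟩
      intro x hx y hy
      rw [hl5] at hx
      simp at hx hy
      subst hx hy
      exact hji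
    · simp only [List.Chain']; rw [List.isChain_append]
      refine ⟨hl3, by simp, ?_⟩
      intro x hx y hy
      rw [hl5] at hx
      simp at hx hy
      subst hx hy
      exact hfj
    · intro x hx
      simp at hx
      rcases hx with hx | hx
      · exact le_trans (hl4 x hx) (le_of_lt hji)
      · omega
    · rw [List.getLast?_append]
      simp

lemma es_key (n : ℕ) (f : ℕ → α) :
    ∃ i ≤ n*n, n+1 ≤ upLen f i ∨ n+1 ≤ upLen (OrderDual.toDual ∘ f) i := by
  by_contra hc
  push_neg at hc
  have hb : ∀ i ∈ Finset.range (n*n+1),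
      (upLen f i, upLen (OrderDual.toDual ∘ f) i) ∈
        (Finset.Icc 1 n) ×ˢ (Finset.Icc 1 n) := by
    intro i hi
    rw [Finset.mem_range] at hi
    obtain ⟨h1, h2⟩ := hc i (by omega)
    have := upLen_pos f i
    have := upLen_pos (OrderDual.toDual ∘ f) i
    simp only [Finset.mem_product, Finset.mem_Icc]
    omega
  have hinj : Set.InjOn (fun i => (upLen f i, upLen (OrderDual.toDual ∘ f) i))
      (Finset.range (n*n+1)) := by
    intro i _ j _ hij
    by_contra hne
    rcases lt_or_gt_of_ne hne with h | h
    · rcases le_or_gt (f i) (f j) with hle | hlt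
      · have := upLen_lt f h hle
        simp only [Prod.mk.injEq] at hij
        omega
      · have := upLen_lt (OrderDual.toDual ∘ f) h (by
          simp only [Function.comp_apply]
          exact OrderDual.toDual_le_toDual.mpr (le_of_lt hlt))
        simp only [Prod.mk.injEq] at hij
        omega
    · rcases le_or_gt (f j) (f i) with hle | hlt
      · have := upLen_lt f h hle
        simp only [Prod.mk.injEq] at hij
        omega
      · have := upLen_lt (OrderDual.toDual ∘ f) h (by
          simp only [Function.comp_apply]
          exact OrderDual.toDual_le_toDual.mpr (le_of_lt hlt))
        simp only [Prod.mk.injEq] at hij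
        omega
  have hcard := Finset.card_le_card_of_injOn _ hb hinj
  simp [Nat.Icc_eq_range'] at hcard

lemma erdos_szekeres_seq (n : ℕ) (f : ℕ → α) :
    ∃ l : List ℕ, l.length = n+1 ∧ l.Chain' (· < ·) ∧ (∀ x ∈ l, x ≤ n*n) ∧
      (l.Chain' (fun a b => f a ≤ f b) ∨ l.Chain' (fun a b => f b ≤ f a)) := by
  obtain ⟨i, hi, h | h⟩ := es_key n f
  · obtain ⟨l, h1, h2, h3, h4, _⟩ := exists_chain f n i h
    exact ⟨l, h1, h2, fun x hx => le_trans (h4 x hx) hi, Or.inl h3⟩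
  · obtain ⟨l, h1, h2, h3, h4, _⟩ := exists_chain (OrderDual.toDual ∘ f) n i h
    refine ⟨l, h1, h2, fun x hx => le_trans (h4 x hx) hi, Or.inr ?_⟩
    exact h3.imp (fun a b hab => hab)

def lexr (p q : ℤ × ℤ × ℤ) : Prop :=
  p.1 < q.1 ∨ (p.1 = q.1 ∧ (p.2.1 < q.2.1 ∨ (p.2.1 = q.2.1 ∧ p.2.2 ≤ q.2.2)))

instance : DecidableRel lexr := fun p q => by unfold lexr; infer_instance

instance : IsTrans (ℤ × ℤ × ℤ) lexr :=
  ⟨fun a b c hab hbc => by unfold lexr at *; omega⟩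

instance : IsAntisymm (ℤ × ℤ × ℤ) lexr :=
  ⟨fun a b hab hba => by
    unfold lexr at *
    obtain ⟨a1, a2, a3⟩ := a
    obtain ⟨b1, b2, b3⟩ := b
    simp only [Prod.mk.injEq]
    dsimp only at hab hba
    omega⟩

instance : IsTotal (ℤ × ℤ × ℤ) lexr := ⟨fun a b => by unfold lexr; omega⟩

lemma lexr_fst {p q : ℤ × ℤ × ℤ} (h : lexr p q) : p.1 ≤ q.1 := by
  unfold lexr at h; omega

lemma main17 (S : Finset (ℤ × ℤ × ℤ)) (h : S.card = 17) :
    ∃ u ∈ S, ∃ v ∈ S, ∃ w ∈ S, u ≠ v ∧ v ≠ w ∧ u ≠ w ∧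
      grid3Dist u w = grid3Dist u v + grid3Dist v w := by
  classical
  set L := S.sort lexr with hL
  have hlen : L.length = 17 := by rw [hL, Finset.length_sort]; exact h
  have hsort : L.Pairwise lexr := Finset.pairwise_sort S lexr
  have hnd : L.Pairwise (· ≠ ·) := Finset.sort_nodup S lexr
  set σ : ℕ → ℤ × ℤ × ℤ := fun t => L.getD t default with hσ
  have hget : ∀ t (ht : t < 17), σ t = L[t]'(by omega) := by
    intro t ht
    simp only [hσ]
    exact List.getD_eq_getElem L default (by omega)
  have hmem : ∀ t, t < 17 → σ t ∈ S := by
    intro t ht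
    rw [hget t ht, ← Finset.mem_sort (r := lexr)]
    exact List.getElem_mem _
  have hx : ∀ i j, i < j → j < 17 → (σ i).1 ≤ (σ j).1 := by
    intro i j hij hj
    rw [hget i (by omega), hget j hj]
    exact lexr_fst (List.pairwise_iff_getElem.mp hsort i j (by omega) (by omega) hij)
  have hne : ∀ i j, i < j → j < 17 → σ i ≠ σ j := by
    intro i j hij hj
    rw [hget i (by omega), hget j hj]
    exact List.pairwise_iff_getElem.mp hnd i j (by omega) (by omega) hij
  -- first ES application: y-coordinate, n = 4
  obtain ⟨l5, hl5len, hl5lt, hl5bd, hl5y⟩ := erdos_szekeres_seq 4 (fun t => (σ t).2.1)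
  set τ : ℕ → ℕ := fun t => l5.getD t 0 with hτ
  have hget5 : ∀ t (ht : t < 5), τ t = l5[t]'(by omega) := by
    intro t ht
    simp only [hτ]
    exact List.getD_eq_getElem l5 0 (by omega)
  haveI : IsTrans ℕ (· < · : ℕ → ℕ → Prop) := inferInstance
  have hτlt : ∀ p q, p < q → q < 5 → τ p < τ q := by
    intro p q hpq hq
    rw [hget5 p (by omega), hget5 q hq]
    exact List.pairwise_iff_getElem.mp (List.isChain_iff_pairwise.mp hl5lt) p q
      (by omega) (by omega) hpq
  have hτbd : ∀ p, p < 5 → τ p ≤ 16 := by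
    intro p hp
    rw [hget5 p hp]
    exact hl5bd _ (List.getElem_mem _)
  have hτy : ∀ p q, p < q → q < 5 →
      ((σ (τ p)).2.1 ≤ (σ (τ q)).2.1 ∨
        (∀ p' q', p' < q' → q' < 5 → (σ (τ q')).2.1 ≤ (σ (τ p')).2.1)) := by
    intro p q hpq hq
    rcases hl5y with hy | hy
    · left
      haveI : IsTrans ℕ (fun a b => (σ a).2.1 ≤ (σ b).2.1) :=
        ⟨fun a b c => le_trans⟩
      have := List.pairwise_iff_getElem.mp (List.isChain_iff_pairwise.mp hy) p q
        (by omega) (by omega) hpq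
      rw [hget5 p (by omega), hget5 q hq]
      exact this
    · right
      intro p' q' hpq' hq'
      haveI : IsTrans ℕ (fun a b => (σ b).2.1 ≤ (σ a).2.1) :=
        ⟨fun a b c hab hbc => le_trans hbc hab⟩
      have := List.pairwise_iff_getElem.mp (List.isChain_iff_pairwise.mp hy) p' q'
        (by omega) (by omega) hpq'
      rw [hget5 p' (by omega), hget5 q' hq']
      exact this
  -- second ES application: z-coordinate along τ, n = 2
  obtain ⟨l3, hl3len, hl3lt, hl3bd, hl3z⟩ := erdos_szekeres_seq 2 (fun t => (σ (τ t)).2.2)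
  obtain ⟨t0, t1, t2, rfl⟩ := List.length_eq_three.mp hl3len
  have ht01 : t0 < t1 ∧ t1 < t2 := by
    simp [List.Chain'] at hl3lt
    exact ⟨hl3lt.1, hl3lt.2⟩
  have htbd : t2 ≤ 4 := hl3bd t2 (by simp)
  have hz : ((σ (τ t0)).2.2 ≤ (σ (τ t1)).2.2 ∧ (σ (τ t1)).2.2 ≤ (σ (τ t2)).2.2) ∨
      ((σ (τ t2)).2.2 ≤ (σ (τ t1)).2.2 ∧ (σ (τ t1)).2.2 ≤ (σ (τ t0)).2.2) := by
    rcases hl3z with hz | hz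
    · left; simp [List.Chain'] at hz; exact ⟨hz.1, hz.2⟩
    · right; simp [List.Chain'] at hz; exact ⟨hz.2, hz.1⟩
  obtain ⟨h01, h12⟩ := ht01
  set k0 := τ t0
  set k1 := τ t1
  set k2 := τ t2
  have hk01 : k0 < k1 := hτlt t0 t1 h01 (by omega)
  have hk12 : k1 < k2 := hτlt t1 t2 h12 (by omega)
  have hk2 : k2 ≤ 16 := hτbd t2 (by omega)
  have hy : ((σ k0).2.1 ≤ (σ k1).2.1 ∧ (σ k1).2.1 ≤ (σ k2).2.1) ∨
      ((σ k2).2.1 ≤ (σ k1).2.1 ∧ (σ k1).2.1 ≤ (σ k0).2.1) := by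
    rcases hτy t0 t1 h01 (by omega) with h | h
    · rcases hτy t1 t2 h12 (by omega) with h' | h'
      · exact Or.inl ⟨h, h'⟩
      · exact Or.inr ⟨h' t1 t2 h12 (by omega), h' t0 t1 h01 (by omega)⟩
    · exact Or.inr ⟨h t1 t2 h12 (by omega), h t0 t1 h01 (by omega)⟩
  refine ⟨σ k0, hmem k0 (by omega), σ k1, hmem k1 (by omega), σ k2, hmem k2 (by omega),
    hne k0 k1 hk01 (by omega), hne k1 k2 hk12 (by omega), hne k0 k2 (by omega) (by omega),
    ?_⟩
  have hx01 : (σ k0).1 ≤ (σ k1).1 := hx k0 k1 hk01 (by omega)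
  have hx12 : (σ k1).1 ≤ (σ k2).1 := hx k1 k2 hk12 (by omega)
  simp only [grid3Dist]
  rcases hy with ⟨hy1, hy2⟩ | ⟨hy1, hy2⟩ <;> rcases hz with ⟨hz1, hz2⟩ | ⟨hz1, hz2⟩ <;> omega

theorem stmt_11 :
    (∀ S : Finset (ℤ × ℤ × ℤ), S.card = 17 →
      ∃ u ∈ S, ∃ v ∈ S, ∃ w ∈ S, u ≠ v ∧ v ≠ w ∧ u ≠ w ∧
        grid3Dist u w = grid3Dist u v + grid3Dist v w) ∧
    (∀ S : Set (ℤ × ℤ × ℤ), IsGenPosDist grid3Dist S →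
      S.Finite ∧ S.ncard ≤ 16) := by
  refine ⟨main17, ?_⟩
  intro S hS
  have key : ∀ T : Finset (ℤ × ℤ × ℤ), ↑T ⊆ S → T.card ≠ 17 := by
    intro T hT hc
    obtain ⟨u, hu, v, hv, w, hw, h1, h2, h3, h4⟩ := main17 T hc
    exact hS u (hT hu) v (hT hv) w (hT hw) h1 h2 h3 h4
  have hfin : S.Finite := by
    by_contra hinf
    obtain ⟨T, hT, hcard⟩ := (show S.Infinite from hinf).exists_subset_card_eq 17
    exact key T hT hcard
  refine ⟨hfin, ?_⟩
  by_contra hc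
  push_neg at hc
  obtain ⟨T, hTsub, hTcard⟩ := Finset.exists_subset_card_eq (s := hfin.toFinset) (n := 17)
    (by rw [Set.ncard_eq_toFinset_card S hfin] at hc; omega)
  exact key T (fun x hx => hfin.mem_toFinset.mp (hTsub hx)) hTcard
end

section
/- The general position number of the infinite 3-dimensional grid P_∞^{□,3} (the graph on ℤ³ with L¹ graph distance) satisfies 10 ≤ gp(P_∞^{□,3}) ≤ 16. -/
/-- Strict lexicographic order on ℤ³. -/
def lexLT (p q : ℤ × ℤ × ℤ) : Prop :=
  p.1 < q.1 ∨ (p.1 = q.1 ∧ (p.2.1 < q.2.1 ∨ (p.2.1 = q.2.1 ∧ p.2.2 < q.2.2)))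

instance : DecidableRel lexLT := fun p q => by unfold lexLT; infer_instance

/-- Color of an ordered pair: weak comparison signs of 2nd and 3rd coordinates. -/
def col (u v : ℤ × ℤ × ℤ) : Bool × Bool :=
  (decide (u.2.1 ≤ v.2.1), decide (u.2.2 ≤ v.2.2))

lemma lexLT_ne {u v : ℤ × ℤ × ℤ} (h : lexLT u v) : u ≠ v := by
  intro he; subst he; unfold lexLT at h; omega

lemma lexLT_total {u v : ℤ × ℤ × ℤ} (h : u ≠ v) : lexLT u v ∨ lexLT v u := by
  unfold lexLT
  have : ¬ (u.1 = v.1 ∧ u.2.1 = v.2.1 ∧ u.2.2 = v.2.2) := by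
    intro ⟨h1, h2, h3⟩
    exact h (Prod.ext h1 (Prod.ext h2 h3))
  omega

lemma lexLT_trans_ne {u v w : ℤ × ℤ × ℤ} (h1 : lexLT u v) (h2 : lexLT v w) : u ≠ w := by
  intro he; subst he; unfold lexLT at h1 h2; omega

lemma chain_eq {u v w : ℤ × ℤ × ℤ} (h1 : lexLT u v) (h2 : lexLT v w)
    (hc : col u v = col v w) :
    grid3Dist u w = grid3Dist u v + grid3Dist v w := by
  have hc2 := congrArg Prod.fst hc
  have hc3 := congrArg Prod.snd hc
  simp only [col, decide_eq_decide] at hc2 hc3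
  unfold lexLT at h1 h2
  unfold grid3Dist
  omega

lemma finset_card_le (T : Finset (ℤ × ℤ × ℤ))
    (hT : IsGenPosDist grid3Dist (T : Set (ℤ × ℤ × ℤ))) : T.card ≤ 16 := by
  by_contra hcard
  push_neg at hcard
  set g : (ℤ × ℤ × ℤ) → (Bool × Bool → Bool) :=
    fun v c => decide (∃ u ∈ T, lexLT u v ∧ col u v = c) with hg
  have key : ∀ v ∈ T, ∀ w ∈ T, lexLT v w → g v = g w → False := by
    intro v hv w hw hlex hgvw
    have h2 : g w (col v w) = true := by
      rw [hg]; exact decide_eq_true ⟨v, hv, hlex, rfl⟩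
    rw [← hgvw, hg] at h2
    obtain ⟨u, hu, hulex, hucol⟩ := of_decide_eq_true h2
    have heq := chain_eq hulex hlex hucol
    exact hT u (Finset.mem_coe.mpr hu) v (Finset.mem_coe.mpr hv) w (Finset.mem_coe.mpr hw)
      (lexLT_ne hulex) (lexLT_ne hlex) (lexLT_trans_ne hulex hlex) heq
  have hcard' : (Finset.univ : Finset (Bool × Bool → Bool)).card < T.card := by
    have h16 : (Finset.univ : Finset (Bool × Bool → Bool)).card = 16 := by
      simp [Finset.card_univ]
    omega
  obtain ⟨v, hv, w, hw, hvw, hgvw⟩ :=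
    Finset.exists_ne_map_eq_of_card_lt_of_maps_to hcard' (fun v _ => Finset.mem_univ (g v))
  rcases lexLT_total hvw with h | h
  · exact key v hv w hw h hgvw
  · exact key w hw v hv h hgvw.symm

lemma gp_mono {V : Type*} {d : V → V → ℕ} {S S' : Set V} (h : S' ⊆ S)
    (hS : IsGenPosDist d S) : IsGenPosDist d S' :=
  fun u hu v hv w hw h1 h2 h3 => hS u (h hu) v (h hv) w (h hw) h1 h2 h3

/-- 10 ≤ gp(P∞^{□,3}) ≤ 16. -/
theorem stmt_12 :
    (∃ S : Finset (ℤ × ℤ × ℤ),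
      IsGenPosDist grid3Dist (S : Set (ℤ × ℤ × ℤ)) ∧ S.card = 10) ∧
    (∀ S : Set (ℤ × ℤ × ℤ), IsGenPosDist grid3Dist S →
      S.Finite ∧ S.ncard ≤ 16) := by
  constructor
  · refine ⟨{(1,2,1), (3,0,3), (1,4,3), (0,3,2), (2,1,4), (3,2,5), (3,5,1), (5,2,3),
      (4,1,2), (3,4,0)}, ?_, by decide⟩
    unfold IsGenPosDist
    simp only [Finset.mem_coe]
    decide
  · intro S hS
    have hfin : S.Finite := by
      by_contra hinf
      obtain ⟨T, hsub, hTcard⟩ := (show S.Infinite from hinf).exists_subset_card_eq 17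
      have := finset_card_le T (gp_mono hsub hS)
      omega
    refine ⟨hfin, ?_⟩
    rw [Set.ncard_eq_toFinset_card S hfin]
    exact finset_card_le _ (by rw [Set.Finite.coe_toFinset]; exact hS)
end

section
/- For every positive integer k, the general position number of the infinite k-dimensional grid (the graph on ℤ^k with graph distance equal to L¹ distance) is finite. -/
/-- Graph distance in the infinite k-dim grid on ℤ^k (L¹ distance). -/
def gridkDist (k : ℕ) (p q : Fin k → ℤ) : ℕ :=
  ∑ i, (p i - q i).natAbs

/-- The gp-number of the infinite k-dim grid is finite. -/
theorem stmt_13 (k : ℕ) (hk : 0 < k) :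
    ∃ N : ℕ, ∀ S : Set (Fin k → ℤ), IsGenPosDist (gridkDist k) S →
      S.Finite ∧ S.ncard ≤ N := by
  classical
  -- sign vector of an ordered pair
  set σ : (Fin k → ℤ) → (Fin k → ℤ) → (Fin k → Bool) :=
    fun p q i => decide (p i ≤ q i) with hσ
  -- geometry: coordinatewise betweenness gives distance additivity
  have geo : ∀ u v w : Fin k → ℤ, σ u v = σ v w →
      gridkDist k u w = gridkDist k u v + gridkDist k v w := by
    intro u v w h
    unfold gridkDist
    rw [← Finset.sum_add_distrib]
    refine Finset.sum_congr rfl fun i _ => ?_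
    have hi : σ u v i = σ v w i := by rw [h]
    simp only [hσ, decide_eq_decide] at hi
    rcases le_or_gt (u i) (v i) with h1 | h1
    · have h2 : v i ≤ w i := hi.mp h1
      omega
    · have h2 : ¬ (v i ≤ w i) := fun h2 => absurd (hi.mpr h2) (not_le.mpr h1)
      omega
  -- antisymmetry: σ p q ≠ σ q p for p ≠ q
  have anti : ∀ p q : Fin k → ℤ, p ≠ q → σ p q ≠ σ q p := by
    intro p q hpq h
    apply hpq
    funext i
    have hi : σ p q i = σ q p i := by rw [h]
    simp only [hσ, decide_eq_decide] at hi
    omega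
  refine ⟨Nat.card (Set (Fin k → Bool)), fun S hS => ?_⟩
  set F : (Fin k → ℤ) → Set (Fin k → Bool) :=
    fun v => {c | ∃ x ∈ S, x ≠ v ∧ σ v x = c} with hF
  have hinj : Set.InjOn F S := by
    intro u hu v hv huv
    by_contra hne
    have h1 : σ u v ∈ F u := ⟨v, hv, Ne.symm hne, rfl⟩
    rw [huv] at h1
    obtain ⟨x, hx, hxv, hvx⟩ := h1
    have hux : u ≠ x := by
      rintro rfl
      exact anti u v hne hvx.symm
    exact hS u hu v hv x hx hne (Ne.symm hxv) hux (geo u v x hvx.symm)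
  have hfin : S.Finite :=
    Set.Finite.of_finite_image (Set.toFinite _) hinj
  refine ⟨hfin, ?_⟩
  calc S.ncard = (F '' S).ncard := (Set.ncard_image_of_injOn hinj).symm
    _ ≤ (Set.univ : Set (Set (Fin k → Bool))).ncard :=
        Set.ncard_le_ncard (Set.subset_univ _) Set.finite_univ
    _ = Nat.card (Set (Fin k → Bool)) := Set.ncard_univ _
end

section
/- Let S be a general position set of the grid graph P_r □ P_s (vertex set {0,...,r-1} × {0,...,s-1}, graph distance = L¹ distance). If S contains a corner vertex (a vertex of degree 2, e.g., (0,0)), then |S| ≤ 3. -/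
/-- Graph distance in the grid P_r □ P_s (L¹ distance). -/
def pathGridDist {r s : ℕ} (p q : Fin r × Fin s) : ℕ :=
  ((p.1 : ℤ) - (q.1 : ℤ)).natAbs + ((p.2 : ℤ) - (q.2 : ℤ)).natAbs

/-- A general position set of P_r □ P_s containing a corner vertex has at
most 3 vertices. -/
theorem stmt_14 {r s : ℕ} (hr : 2 ≤ r) (hs : 2 ≤ s)
    (S : Finset (Fin r × Fin s))
    (hS : IsGenPosDist pathGridDist (S : Set (Fin r × Fin s)))
    (hcorner : ∃ c ∈ S, ((c.1 : ℕ) = 0 ∨ (c.1 : ℕ) = r - 1) ∧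
                        ((c.2 : ℕ) = 0 ∨ (c.2 : ℕ) = s - 1)) :
    S.card ≤ 3 := by
  by_contra hcard
  push_neg at hcard
  obtain ⟨c, hc, hc1, hc2⟩ := hcorner
  -- transformed coordinates: distance from the corner in each axis
  set a : Fin r × Fin s → ℕ := fun p => ((c.1 : ℤ) - (p.1 : ℤ)).natAbs with ha
  set b : Fin r × Fin s → ℕ := fun p => ((c.2 : ℤ) - (p.2 : ℤ)).natAbs with hb
  have hA : ∀ p q : Fin r × Fin s,
      pathGridDist p q = ((a p : ℤ) - (a q : ℤ)).natAbs + ((b p : ℤ) - (b q : ℤ)).natAbs := by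
    intro p q
    have h1 := p.1.isLt; have h2 := q.1.isLt; have h3 := p.2.isLt; have h4 := q.2.isLt
    simp only [ha, hb]
    unfold pathGridDist
    omega
  have hB : ∀ p : Fin r × Fin s, pathGridDist c p = a p + b p := by
    intro p
    have h1 := p.1.isLt; have h3 := p.2.isLt
    simp only [ha, hb]
    unfold pathGridDist
    omega
  have hinj : ∀ p q : Fin r × Fin s, a p = a q → b p = b q → p = q := by
    intro p q h1 h2
    have h3 := p.1.isLt; have h4 := q.1.isLt; have h5 := p.2.isLt; have h6 := q.2.isLt
    simp only [ha, hb] at h1 h2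
    have e1 : (p.1 : ℕ) = (q.1 : ℕ) := by omega
    have e2 : (p.2 : ℕ) = (q.2 : ℕ) := by omega
    exact Prod.ext (Fin.ext e1) (Fin.ext e2)
  -- no two non-corner points of S are comparable
  have incomp : ∀ x ∈ S, ∀ y ∈ S, x ≠ c → y ≠ c → x ≠ y →
      ¬(a x ≤ a y ∧ b x ≤ b y) := by
    rintro x hx y hy hxc hyc hxy ⟨h1, h2⟩
    have hg := hS c hc x hx y hy (Ne.symm hxc) hxy (Ne.symm hyc)
    have e1 := hB y; have e2 := hB x; have e3 := hA x y
    omega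
  have aneq : ∀ x ∈ S, ∀ y ∈ S, x ≠ c → y ≠ c → x ≠ y → a x ≠ a y := by
    intro x hx y hy hxc hyc hxy h
    rcases le_total (b x) (b y) with hb' | hb'
    · exact incomp x hx y hy hxc hyc hxy ⟨le_of_eq h, hb'⟩
    · rcases eq_or_lt_of_le hb' with hb'' | hb''
      · exact hxy (hinj x y h hb''.symm)
      · exact incomp y hy x hx hyc hxc (Ne.symm hxy) ⟨le_of_eq h.symm, le_of_lt hb''⟩
  -- three distinct non-corner points can't have increasing a-coordinates
  have key3 : ∀ x ∈ S, ∀ y ∈ S, ∀ z ∈ S, x ≠ c → y ≠ c → z ≠ c →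
      x ≠ y → y ≠ z → x ≠ z → a x < a y → a y < a z → False := by
    intro x hx y hy z hz hxc hyc hzc hxy hyz hxz haxy hayz
    have b1 : b y < b x := by
      by_contra h
      exact incomp x hx y hy hxc hyc hxy ⟨le_of_lt haxy, by omega⟩
    have b2 : b z < b y := by
      by_contra h
      exact incomp y hy z hz hyc hzc hyz ⟨le_of_lt hayz, by omega⟩
    have hg := hS x hx y hy z hz hxy hyz hxz
    have e1 := hA x z; have e2 := hA x y; have e3 := hA y z
    omega
  -- extract three distinct elements of S different from c
  have hcerase := Finset.card_erase_of_mem hc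
  obtain ⟨u, hu⟩ := Finset.card_pos.mp (show 0 < (S.erase c).card by omega)
  have huerase := Finset.card_erase_of_mem hu
  obtain ⟨v, hv⟩ := Finset.card_pos.mp (show 0 < ((S.erase c).erase u).card by omega)
  have hverase := Finset.card_erase_of_mem hv
  obtain ⟨w, hw⟩ := Finset.card_pos.mp
    (show 0 < (((S.erase c).erase u).erase v).card by omega)
  obtain ⟨hwv, hw⟩ := Finset.mem_erase.mp hw
  obtain ⟨hwu, hw⟩ := Finset.mem_erase.mp hw
  obtain ⟨hwc, hwS⟩ := Finset.mem_erase.mp hw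
  obtain ⟨hvu, hv⟩ := Finset.mem_erase.mp hv
  obtain ⟨hvc, hvS⟩ := Finset.mem_erase.mp hv
  obtain ⟨huc, huS⟩ := Finset.mem_erase.mp hu
  have d1 := aneq u huS v hvS huc hvc (Ne.symm hvu)
  have d2 := aneq v hvS w hwS hvc hwc (Ne.symm hwv)
  have d3 := aneq u huS w hwS huc hwc (Ne.symm hwu)
  rcases lt_trichotomy (a u) (a v) with h1 | h1 | h1
  · rcases lt_trichotomy (a v) (a w) with h2 | h2 | h2
    · exact key3 u huS v hvS w hwS huc hvc hwc (Ne.symm hvu) (Ne.symm hwv) (Ne.symm hwu) h1 h2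
    · exact d2 h2
    · rcases lt_trichotomy (a u) (a w) with h3 | h3 | h3
      · exact key3 u huS w hwS v hvS huc hwc hvc (Ne.symm hwu) hwv (Ne.symm hvu) h3 h2
      · exact d3 h3
      · exact key3 w hwS u huS v hvS hwc huc hvc hwu (Ne.symm hvu) hwv h3 h1
  · exact d1 h1
  · rcases lt_trichotomy (a v) (a w) with h2 | h2 | h2
    · rcases lt_trichotomy (a u) (a w) with h3 | h3 | h3
      · exact key3 v hvS u huS w hwS hvc huc hwc hvu (Ne.symm hwu) (Ne.symm hwv) h1 h3
      · exact d3 h3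
      · exact key3 v hvS w hwS u huS hvc hwc huc (Ne.symm hwv) hwu hvu h2 h3
    · exact d2 h2
    · exact key3 w hwS v hvS u huS hwc hvc huc hwv hvu hwu h2 h1
end

section
/- If R is a general position set of a connected graph G and v ∈ R, then |R| ≤ ip(v,G) + 1, where ip(v,G) is the minimum number of geodesics of G, all starting at v, whose union covers all vertices of G. -/
private lemma split_lens {V : Type*} [DecidableEq V] {G : SimpleGraph V} (hc : G.Connected) {v e : V} (p : G.Walk v e)
    (hp : p.length = G.dist v e) {u : V} (hu : u ∈ p.support) :
    (p.takeUntil u hu).length = G.dist v u ∧ (p.dropUntil u hu).length = G.dist u e ∧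
      G.dist v u + G.dist u e = G.dist v e := by
  have hsum : (p.takeUntil u hu).length + (p.dropUntil u hu).length = p.length := by
    have := congr_arg SimpleGraph.Walk.length (p.take_spec hu)
    rwa [SimpleGraph.Walk.length_append] at this
  have h1 := SimpleGraph.dist_le (p.takeUntil u hu)
  have h2 := SimpleGraph.dist_le (p.dropUntil u hu)
  have h3 := hc.dist_triangle (u := v) (v := u) (w := e)
  omega

private lemma on_geodesic {V : Type*} [DecidableEq V] {G : SimpleGraph V} (hc : G.Connected) {v e : V} (p : G.Walk v e)
    (hp : p.length = G.dist v e) {u w : V} (hu : u ∈ p.support) (hw : w ∈ p.support) :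
    G.dist v w = G.dist v u + G.dist u w ∨ G.dist v u = G.dist v w + G.dist w u := by
  obtain ⟨h1, h2, h3⟩ := split_lens hc p hp hu
  have hw' : w ∈ (p.takeUntil u hu).support ∨ w ∈ (p.dropUntil u hu).support := by
    have := p.take_spec hu
    rw [← this, SimpleGraph.Walk.mem_support_append_iff] at hw
    exact hw
  rcases hw' with hw' | hw'
  · right
    obtain ⟨_, _, h6⟩ := split_lens hc (p.takeUntil u hu) h1 hw'
    exact h6.symm
  · left
    obtain ⟨h4, _, h6⟩ := split_lens hc (p.dropUntil u hu) h2 hw'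
    have h7 := hc.dist_triangle (u := v) (v := u) (w := w)
    have h8 := hc.dist_triangle (u := v) (v := w) (w := e)
    have h9 := hc.dist_triangle (u := w) (v := u) (w := e)
    omega

/-- If R is a general position set, v ∈ R, and there is a cover of V(G) by n
geodesics all starting at v, then |R| ≤ n + 1.  (Hence |R| ≤ ip(v,G) + 1.) -/
theorem stmt_17 {V : Type*} (G : SimpleGraph V) (hG : G.Connected)
    (R : Finset V) (hR : IsGenPos G (R : Set V)) (v : V) (hv : v ∈ R)
    (n : ℕ) (ends : Fin n → V) (P : ∀ i, G.Walk v (ends i))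
    (hgeo : ∀ i, (P i).length = G.dist v (ends i))
    (hcover : ∀ u : V, ∃ i, u ∈ (P i).support) :
    R.card ≤ n + 1 := by
  classical
  have key : (R.erase v).card ≤ n := by
    have := Finset.card_le_card_of_injOn (f := fun u => (hcover u).choose)
      (s := R.erase v) (t := Finset.univ) (fun _ _ => Finset.mem_univ _) ?_
    · simpa using this
    · intro u hu w hw hfe
      by_contra hne
      have hu' := (hcover u).choose_spec
      have hw' := (hcover w).choose_spec
      have hfe' : (hcover u).choose = (hcover w).choose := hfe
      rw [hfe'] at hu'
      set i := (hcover w).choose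
      have huR : u ∈ R := Finset.mem_of_mem_erase hu
      have hwR : w ∈ R := Finset.mem_of_mem_erase hw
      have huv : u ≠ v := Finset.ne_of_mem_erase hu
      have hwv : w ≠ v := Finset.ne_of_mem_erase hw
      rcases on_geodesic hG (P i) (hgeo i) hu' hw' with h | h
      · exact hR v hv u huR w hwR (Ne.symm huv) hne (Ne.symm hwv) h
      · exact hR v hv w hwR u huR (Ne.symm hwv) (Ne.symm hne) (Ne.symm huv) h
  have := Finset.card_erase_add_one hv
  omega
end

section
/- For every r ≥ 1, the general position number of the r-dimensional Beneš network BN(r) equals 2^{r+1}. -/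
/-- The bit position used between level `ℓ` and level `ℓ+1` of the
r-dimensional Beneš network (levels `0, …, 2r`): the first butterfly uses
bit `ℓ` for `ℓ < r`, and the mirrored back-to-back butterfly uses bit
`2r - 1 - ℓ` for `r ≤ ℓ < 2r`. -/
def benesBit (r ℓ : ℕ) : ℕ := if ℓ < r then ℓ else 2 * r - 1 - ℓ

/-- The r-dimensional Beneš network BN(r): vertices are pairs `(w, i)` where
`w : Fin r → Bool` is the column and `i` is the level (`0 ≤ i ≤ 2r`).  A
vertex at level `i` is adjacent to a vertex at level `i+1` iff their columns
are identical or differ exactly in the bit position `benesBit r i`. -/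
def BenesNetwork (r : ℕ) : SimpleGraph ((Fin r → Bool) × Fin (2 * r + 1)) :=
  SimpleGraph.fromRel (fun u v =>
    (v.2 : ℕ) = (u.2 : ℕ) + 1 ∧
      (u.1 = v.1 ∨
        ∃ j : Fin r, (j : ℕ) = benesBit r (u.2 : ℕ) ∧
          v.1 = Function.update u.1 j (! u.1 j)))

namespace BenesAux

variable {r : ℕ}

abbrev V (r : ℕ) := (Fin r → Bool) × Fin (2 * r + 1)

def Rel (r : ℕ) (u v : V r) : Prop :=
  (v.2 : ℕ) = (u.2 : ℕ) + 1 ∧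
    (u.1 = v.1 ∨
      ∃ j : Fin r, (j : ℕ) = benesBit r (u.2 : ℕ) ∧
        v.1 = Function.update u.1 j (! u.1 j))

lemma adj_iff {u v : V r} :
    (BenesNetwork r).Adj u v ↔ u ≠ v ∧ (Rel r u v ∨ Rel r v u) := by
  rfl

lemma adj_lev {u v : V r} (h : (BenesNetwork r).Adj u v) :
    ((v.2 : ℕ) = (u.2 : ℕ) + 1 ∨ (u.2 : ℕ) = (v.2 : ℕ) + 1) := by
  rcases (adj_iff.mp h).2 with h' | h'
  · exact Or.inl h'.1
  · exact Or.inr h'.1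

lemma rel_bit {u v : V r} (h : Rel r u v) (j : Fin r)
    (hj : (j : ℕ) ≠ benesBit r (u.2 : ℕ)) : u.1 j = v.1 j := by
  rcases h.2 with h' | ⟨j', hj', hup⟩
  · rw [h']
  · rw [hup, Function.update_of_ne]
    intro hh
    exact hj (hh ▸ hj')

lemma adj_bit {u v : V r} (h : (BenesNetwork r).Adj u v) (j : Fin r)
    (hj : (j : ℕ) ≠ benesBit r (min (u.2 : ℕ) (v.2 : ℕ))) : u.1 j = v.1 j := by
  rcases (adj_iff.mp h).2 with h' | h'
  · have h1 := h'.1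
    exact rel_bit h' j (by rwa [min_eq_left (by omega : (u.2:ℕ) ≤ (v.2:ℕ))] at hj)
  · have h1 := h'.1
    exact (rel_bit h' j (by rwa [min_eq_right (by omega : (v.2:ℕ) ≤ (u.2:ℕ))] at hj)).symm

def levgap (x y : V r) : ℕ := (((x.2 : ℕ) : ℤ) - ((y.2 : ℕ) : ℤ)).natAbs

lemma levgap_le_length {x y : V r} (p : (BenesNetwork r).Walk x y) :
    levgap x y ≤ p.length := by
  induction p with
  | nil => simp [levgap]
  | @cons u u' v h q ih =>
    have := adj_lev h
    have h1 : levgap u u' ≤ 1 := by unfold levgap; omega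
    have : levgap u v ≤ levgap u u' + levgap u' v := by unfold levgap; omega
    simp only [SimpleGraph.Walk.length_cons]
    omega

lemma split_le_length {x y z : V r} (p : (BenesNetwork r).Walk x y)
    (hz : z ∈ p.support) : levgap x z + levgap z y ≤ p.length := by
  have h1 := levgap_le_length (p.takeUntil z hz)
  have h2 := levgap_le_length (p.dropUntil z hz)
  have h3 := congrArg SimpleGraph.Walk.length (p.take_spec hz)
  rw [SimpleGraph.Walk.length_append] at h3
  omega

lemma bits_high {M : ℕ} (hM : M < r) :
    ∀ {x y : V r} (p : (BenesNetwork r).Walk x y),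
      (∀ z ∈ p.support, (z.2 : ℕ) ≤ M) → x.1 ⟨M, hM⟩ = y.1 ⟨M, hM⟩ := by
  intro x y p
  induction p with
  | nil => intro _; rfl
  | @cons u u' v h q ih =>
    intro hall
    have hu : (u.2 : ℕ) ≤ M := hall u (by simp)
    have hu' : (u'.2 : ℕ) ≤ M := hall u' (by simp)
    have hlev := adj_lev h
    have hmin : min (u.2 : ℕ) (u'.2 : ℕ) < M := by omega
    have hbit : benesBit r (min (u.2 : ℕ) (u'.2 : ℕ)) = min (u.2 : ℕ) (u'.2 : ℕ) := by
      unfold benesBit; rw [if_pos (by omega)]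
    have h1 : u.1 ⟨M, hM⟩ = u'.1 ⟨M, hM⟩ := by
      apply adj_bit h
      rw [hbit]; simp; omega
    rw [h1]
    exact ih (fun z hz => hall z (by simp [hz]))

end BenesAux

namespace BenesAux

variable {r : ℕ}

lemma straight (d : ℕ) (w : Fin r → Bool) :
    ∀ (i j : Fin (2 * r + 1)), (j : ℕ) = (i : ℕ) + d →
      ∃ p : (BenesNetwork r).Walk (w, i) (w, j), p.length = d := by
  induction d with
  | zero =>
    intro i j hj
    have : i = j := Fin.ext (by omega)
    subst this
    exact ⟨SimpleGraph.Walk.nil, rfl⟩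
  | succ d ih =>
    intro i j hj
    have hj' : (i : ℕ) + d < 2 * r + 1 := by omega
    obtain ⟨p, hp⟩ := ih i ⟨(i : ℕ) + d, hj'⟩ rfl
    have hadj : (BenesNetwork r).Adj (w, (⟨(i : ℕ) + d, hj'⟩ : Fin (2 * r + 1))) (w, j) := by
      refine adj_iff.mpr ⟨?_, Or.inl ⟨by simp [hj]; omega, Or.inl rfl⟩⟩
      intro hc
      have := congrArg (fun x => (x.2 : ℕ)) hc
      simp at this
      omega
    exact ⟨p.concat hadj, by simp [hp]⟩

lemma bool_flip {a b : Bool} (h : ¬ a = b) : b = ! a := by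
  cases a <;> cases b <;> simp_all

lemma ascend (d : ℕ) (a : Fin r → Bool) (i : Fin (2 * r + 1)) :
    ∀ (b : Fin r → Bool) (j : Fin (2 * r + 1)), (j : ℕ) = (i : ℕ) + d → (j : ℕ) ≤ r →
      (∀ t : Fin r, ((t : ℕ) < (i : ℕ) ∨ (j : ℕ) ≤ (t : ℕ)) → a t = b t) →
      ∃ p : (BenesNetwork r).Walk (a, i) (b, j), p.length = d := by
  induction d with
  | zero =>
    intro b j hj _ hab
    have hij : i = j := Fin.ext (by omega)
    have : a = b := funext fun t => hab t (by omega)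
    subst hij this
    exact ⟨SimpleGraph.Walk.nil, rfl⟩
  | succ d ih =>
    intro b j hj hjr hab
    have hlt : (i : ℕ) + d < 2 * r + 1 := by omega
    have hbit : (i : ℕ) + d < r := by omega
    set j' : Fin (2 * r + 1) := ⟨(i : ℕ) + d, hlt⟩ with hj'def
    set jb : Fin r := ⟨(i : ℕ) + d, hbit⟩ with hjbdef
    set b' : Fin r → Bool := fun t => if (t : ℕ) < (i : ℕ) + d then b t else a t with hb'def
    obtain ⟨p, hp⟩ := ih b' j' rfl (by simp [hj'def]; omega)
      (fun t ht => by
        rcases ht with ht | ht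
        · have : (t : ℕ) < (i : ℕ) + d := by omega
          simp only [hb'def, if_pos this]
          exact hab t (Or.inl ht)
        · simp only [hb'def] at *
          rw [if_neg (by simp at ht ⊢; omega)])
    have hoff : ∀ t : Fin r, t ≠ jb → b' t = b t := by
      intro t ht
      have htv : (t : ℕ) ≠ (i : ℕ) + d := fun hc => ht (Fin.ext hc)
      by_cases hlt2 : (t : ℕ) < (i : ℕ) + d
      · simp only [hb'def, if_pos hlt2]
      · simp only [hb'def, if_neg hlt2]
        exact hab t (Or.inr (by omega))
    have hcol : b' = b ∨ b = Function.update b' jb (! b' jb) := by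
      by_cases hc : b' jb = b jb
      · left
        funext t
        by_cases ht : t = jb
        · rw [ht, hc]
        · exact hoff t ht
      · right
        funext t
        by_cases ht : t = jb
        · subst ht
          rw [Function.update_self]
          exact bool_flip fun h => hc h
        · rw [Function.update_of_ne ht]
          exact (hoff t ht).symm
    have hadj : (BenesNetwork r).Adj (b', j') (b, j) := by
      refine adj_iff.mpr ⟨?_, Or.inl ⟨by simp [hj'def, hj]; omega, ?_⟩⟩
      · intro hc
        have := congrArg (fun x => (x.2 : ℕ)) hc
        simp [hj'def] at this
        omega
      · rcases hcol with hcol | hcol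
        · exact Or.inl hcol
        · refine Or.inr ⟨jb, ?_, hcol⟩
          simp only [hj'def, hjbdef, benesBit, if_pos hbit]
    exact ⟨p.concat hadj, by simp [hp]⟩


def l0 (r : ℕ) : Fin (2 * r + 1) := ⟨0, by omega⟩
def lT (r : ℕ) : Fin (2 * r + 1) := ⟨2 * r, by omega⟩

def diffs (a b : Fin r → Bool) : Finset (Fin r) :=
  Finset.univ.filter (fun j => a j ≠ b j)

def M (a b : Fin r → Bool) : ℕ := (diffs a b).sup (fun j => (j : ℕ))

lemma diffs_nonempty {a b : Fin r → Bool} (h : a ≠ b) : (diffs a b).Nonempty := by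
  by_contra hc
  rw [Finset.not_nonempty_iff_eq_empty] at hc
  apply h
  funext t
  by_contra ht
  have : t ∈ diffs a b := by simp [diffs, ht]
  simp [hc] at this

lemma exists_M {a b : Fin r → Bool} (h : a ≠ b) :
    ∃ j ∈ diffs a b, (j : ℕ) = M a b := by
  obtain ⟨j, hm, he⟩ := Finset.exists_mem_eq_sup (diffs a b) (diffs_nonempty h) (fun j => (j : ℕ))
  exact ⟨j, hm, he.symm⟩

lemma le_M {a b : Fin r → Bool} {j : Fin r} (h : a j ≠ b j) : (j : ℕ) ≤ M a b :=
  Finset.le_sup (by simp [diffs, h])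

lemma M_lt {a b : Fin r → Bool} (h : a ≠ b) : M a b < r := by
  obtain ⟨j, _, hj⟩ := exists_M h
  omega

lemma eq_of_gt_M {a b : Fin r → Bool} {j : Fin r} (h : M a b < (j : ℕ)) : a j = b j := by
  by_contra hc
  exact absurd (le_M hc) (by omega)

lemma M_symm (a b : Fin r → Bool) : M a b = M b a := by
  unfold M diffs
  congr 1
  ext j
  simp [ne_comm]

lemma M_tri {a b c : Fin r → Bool} (hac : a ≠ c) :
    M a c ≤ M a b ∨ M a c ≤ M b c := by
  obtain ⟨j, hjmem, hj⟩ := exists_M hac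
  simp [diffs] at hjmem
  by_cases hab : a j = b j
  · right
    exact hj ▸ le_M (fun hc => hjmem (hab.trans hc))
  · left
    exact hj ▸ le_M hab

lemma reach_0T (a b : Fin r → Bool) :
    ∃ p : (BenesNetwork r).Walk (a, l0 r) (b, lT r), p.length = 2 * r := by
  have hmid : ((⟨r, by omega⟩ : Fin (2 * r + 1)) : ℕ) = (l0 r : ℕ) + r := by simp [l0]
  obtain ⟨p, hp⟩ := ascend r a (l0 r) b ⟨r, by omega⟩ hmid (by simp) (by simp [l0])
  obtain ⟨q, hq⟩ := straight r b (⟨r, by omega⟩ : Fin (2 * r + 1)) (lT r) (by simp [lT]; omega)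
  exact ⟨p.append q, by simp [hp, hq]; omega⟩

lemma preconn : (BenesNetwork r).Preconnected := by
  have h1 : ∀ x : V r, (BenesNetwork r).Reachable x (x.1, lT r) := by
    intro x
    obtain ⟨p, _⟩ := straight (2 * r - (x.2 : ℕ)) x.1 x.2 (lT r) (by simp [lT]; omega)
    exact ⟨p⟩
  intro x y
  refine (h1 x).trans (.trans ?_ (h1 y).symm)
  obtain ⟨p, _⟩ := reach_0T x.1 x.1
  obtain ⟨q, _⟩ := reach_0T x.1 y.1
  exact (SimpleGraph.Walk.reachable p).symm.trans (SimpleGraph.Walk.reachable q)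

lemma dist_same_col (w : Fin r → Bool) (i j : Fin (2 * r + 1)) (hij : (i : ℕ) ≤ (j : ℕ)) :
    (BenesNetwork r).dist (w, i) (w, j) = (j : ℕ) - (i : ℕ) := by
  obtain ⟨p, hp⟩ := straight ((j : ℕ) - (i : ℕ)) w i j (by omega)
  refine le_antisymm ((SimpleGraph.dist_le p).trans hp.le) ?_
  obtain ⟨q, hq⟩ := (SimpleGraph.Walk.reachable p).exists_walk_length_eq_dist
  have := levgap_le_length q
  unfold levgap at this
  simp only at this
  omega

lemma dist_opp (a b : Fin r → Bool) :
    (BenesNetwork r).dist (a, l0 r) (b, lT r) = 2 * r := by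
  obtain ⟨p, hp⟩ := reach_0T a b
  refine le_antisymm ((SimpleGraph.dist_le p).trans hp.le) ?_
  obtain ⟨q, hq⟩ := (SimpleGraph.Walk.reachable p).exists_walk_length_eq_dist
  have := levgap_le_length q
  rw [hq] at this
  generalize (BenesNetwork r).dist (a, l0 r) (b, lT r) = D at this ⊢
  unfold levgap at this
  simp only [l0, lT] at this
  omega

lemma dist_zero {a b : Fin r → Bool} (h : a ≠ b) :
    (BenesNetwork r).dist (a, l0 r) (b, l0 r) = 2 * (M a b + 1) := by
  have hMr : M a b < r := M_lt h
  -- upper bound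
  obtain ⟨p, hp⟩ := ascend (M a b + 1) a (l0 r) b ⟨M a b + 1, by omega⟩
    (by simp [l0]) (by simp; omega)
    (by
      intro t ht
      simp [l0] at ht
      exact eq_of_gt_M (by omega))
  obtain ⟨q, hq⟩ := straight (M a b + 1) b (l0 r) ⟨M a b + 1, by omega⟩ (by simp [l0])
  have hle : (BenesNetwork r).dist (a, l0 r) (b, l0 r) ≤ 2 * (M a b + 1) := by
    have := SimpleGraph.dist_le (p.append q.reverse)
    simp [hp, hq] at this
    omega
  -- lower bound
  refine le_antisymm hle ?_
  by_contra hc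
  push_neg at hc
  obtain ⟨q', hq'⟩ := ((SimpleGraph.Walk.reachable p).trans
    (SimpleGraph.Walk.reachable q.reverse)).exists_walk_length_eq_dist
  have hlow : ∀ z ∈ q'.support, (z.2 : ℕ) ≤ M a b := by
    intro z hz
    by_contra hzc
    have := split_le_length q' hz
    rw [hq'] at this
    generalize (BenesNetwork r).dist (a, l0 r) (b, l0 r) = D at this hc
    unfold levgap at this
    simp only [l0] at this
    omega
  have := bits_high hMr q' hlow
  simp only at this
  obtain ⟨j, hjmem, hj⟩ := exists_M h
  simp [diffs] at hjmem
  apply hjmem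
  have : j = (⟨M a b, hMr⟩ : Fin r) := Fin.ext hj
  rw [this]
  exact bits_high hMr q' hlow


def mir (x : V r) : V r := (x.1, ⟨2 * r - (x.2 : ℕ), by omega⟩)

lemma mir_mir (x : V r) : mir (mir x) = x := by
  have := x.2.isLt
  exact Prod.ext rfl (Fin.ext (by simp [mir]; omega))

lemma benesBit_mirror {ℓ : ℕ} (h : ℓ < 2 * r) : benesBit r (2 * r - 1 - ℓ) = benesBit r ℓ := by
  unfold benesBit
  split_ifs <;> omega

lemma update_flip {a b : Fin r → Bool} {j : Fin r}
    (h : b = Function.update a j (! a j)) : a = Function.update b j (! b j) := by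
  funext t
  by_cases ht : t = j
  · subst ht
    rw [Function.update_self, h, Function.update_self, Bool.not_not]
  · rw [Function.update_of_ne ht, h, Function.update_of_ne ht]

lemma rel_mirror {u v : V r} (h : Rel r u v) : Rel r (mir v) (mir u) := by
  obtain ⟨hlev, hcol⟩ := h
  have hv := v.2.isLt
  constructor
  · simp [mir]; omega
  · rcases hcol with hcol | ⟨j, hj, hup⟩
    · exact Or.inl hcol.symm
    · refine Or.inr ⟨j, ?_, update_flip hup⟩
      have h1 : 2 * r - (v.2 : ℕ) = 2 * r - 1 - (u.2 : ℕ) := by omega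
      simp only [mir, h1]
      rw [benesBit_mirror (by omega)]
      exact hj

lemma adj_mirror {u v : V r} (h : (BenesNetwork r).Adj u v) :
    (BenesNetwork r).Adj (mir u) (mir v) := by
  obtain ⟨hne, hrel⟩ := adj_iff.mp h
  refine adj_iff.mpr ⟨fun hc => hne ?_, ?_⟩
  · have := congrArg mir hc
    rwa [mir_mir, mir_mir] at this
  · rcases hrel with h' | h'
    · exact Or.inr (rel_mirror h')
    · exact Or.inl (rel_mirror h')

def mirHom : BenesNetwork r →g BenesNetwork r := ⟨mir, adj_mirror⟩

lemma dist_mir_le (u v : V r) :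
    (BenesNetwork r).dist (mir u) (mir v) ≤ (BenesNetwork r).dist u v := by
  obtain ⟨p, hp⟩ := (preconn u v).exists_walk_length_eq_dist
  have := SimpleGraph.dist_le (p.map mirHom)
  rwa [SimpleGraph.Walk.length_map, hp] at this

lemma dist_mir (u v : V r) :
    (BenesNetwork r).dist (mir u) (mir v) = (BenesNetwork r).dist u v := by
  refine le_antisymm (dist_mir_le u v) ?_
  have := dist_mir_le (mir u) (mir v)
  rwa [mir_mir, mir_mir] at this

lemma dist_T {a b : Fin r → Bool} (h : a ≠ b) :
    (BenesNetwork r).dist (a, lT r) (b, lT r) = 2 * (M a b + 1) := by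
  have h1 : mir (a, l0 r) = (a, lT r) := Prod.ext rfl (Fin.ext (by simp [mir, l0, lT]))
  have h2 : mir (b, l0 r) = (b, lT r) := Prod.ext rfl (Fin.ext (by simp [mir, l0, lT]))
  rw [← h1, ← h2, dist_mir]
  exact dist_zero h

lemma no_three {S : Finset (V r)}
    (hS : IsGenPos (BenesNetwork r) (S : Set (V r)))
    {w : Fin r → Bool} {i j k : Fin (2 * r + 1)}
    (hi : (w, i) ∈ S) (hj : (w, j) ∈ S) (hk : (w, k) ∈ S)
    (h1 : (i : ℕ) < (j : ℕ)) (h2 : (j : ℕ) < (k : ℕ)) : False := by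
  have hne : ∀ {i' j' : Fin (2 * r + 1)}, (i' : ℕ) ≠ (j' : ℕ) →
      ((w, i') : V r) ≠ (w, j') := fun h hc => h (congrArg (fun p : V r => ((p.2 : ℕ))) hc)
  apply hS (w, i) hi (w, j) hj (w, k) hk (hne (by omega)) (hne (by omega)) (hne (by omega))
  rw [dist_same_col w i k (by omega), dist_same_col w i j (by omega),
    dist_same_col w j k (by omega)]
  omega


lemma upper (r : ℕ) (S : Finset (V r))
    (hS : IsGenPos (BenesNetwork r) (S : Set (V r))) : S.card ≤ 2 ^ (r + 1) := by
  classical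
  have hfib : ∀ a ∈ S.image Prod.fst,
      (S.filter (fun x => Prod.fst x = a)).card ≤ 2 := by
    intro a _
    by_contra hc
    push_neg at hc
    rw [Finset.two_lt_card_iff] at hc
    obtain ⟨x, y, z, hx, hy, hz, hxy, hxz, hyz⟩ := hc
    simp only [Finset.mem_filter] at hx hy hz
    obtain ⟨a1, i⟩ := x
    obtain ⟨a2, j⟩ := y
    obtain ⟨a3, k⟩ := z
    simp only at hx hy hz
    obtain ⟨hxS, rfl⟩ := hx
    obtain ⟨hyS, rfl⟩ := hy
    obtain ⟨hzS, rfl⟩ := hz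
    have hij : (i : ℕ) ≠ (j : ℕ) := fun h => hxy (by rw [Fin.ext h])
    have hik : (i : ℕ) ≠ (k : ℕ) := fun h => hxz (by rw [Fin.ext h])
    have hjk : (j : ℕ) ≠ (k : ℕ) := fun h => hyz (by rw [Fin.ext h])
    rcases lt_trichotomy (i : ℕ) (j : ℕ) with h1 | h1 | h1
    · rcases lt_trichotomy (j : ℕ) (k : ℕ) with h2 | h2 | h2
      · exact no_three hS hxS hyS hzS h1 h2
      · omega
      · rcases lt_trichotomy (i : ℕ) (k : ℕ) with h3 | h3 | h3
        · exact no_three hS hxS hzS hyS h3 (by omega)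
        · omega
        · exact no_three hS hzS hxS hyS h3 h1
    · omega
    · rcases lt_trichotomy (i : ℕ) (k : ℕ) with h2 | h2 | h2
      · exact no_three hS hyS hxS hzS h1 h2
      · omega
      · rcases lt_trichotomy (j : ℕ) (k : ℕ) with h3 | h3 | h3
        · exact no_three hS hyS hzS hxS h3 (by omega)
        · omega
        · exact no_three hS hzS hyS hxS h3 h1
  have h1 := Finset.card_le_mul_card_image (f := Prod.fst) S 2 hfib
  have h2 : (S.image Prod.fst).card ≤ 2 ^ r := by
    have := Finset.card_le_univ (S.image Prod.fst)
    simpa [Fintype.card_fun] using this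
  have : (2 : ℕ) ^ (r + 1) = 2 * 2 ^ r := by ring
  omega


def outer (r : ℕ) : Finset (V r) :=
  (Finset.univ.image fun w : Fin r → Bool => ((w, l0 r) : V r)) ∪
    (Finset.univ.image fun w : Fin r → Bool => ((w, lT r) : V r))

lemma mem_outer {x : V r} : x ∈ outer r ↔ x.2 = l0 r ∨ x.2 = lT r := by
  obtain ⟨a, i⟩ := x
  simp only [outer, Finset.mem_union, Finset.mem_image, Finset.mem_univ, true_and,
    Prod.mk.injEq]
  constructor
  · rintro (⟨w, rfl, rfl⟩ | ⟨w, rfl, rfl⟩) <;> simp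
  · rintro (rfl | rfl)
    · exact Or.inl ⟨a, rfl, rfl⟩
    · exact Or.inr ⟨a, rfl, rfl⟩

lemma outer_card (hr : 1 ≤ r) : (outer r).card = 2 ^ (r + 1) := by
  classical
  have hdisj : Disjoint (Finset.univ.image fun w : Fin r → Bool => ((w, l0 r) : V r))
      (Finset.univ.image fun w : Fin r → Bool => ((w, lT r) : V r)) := by
    rw [Finset.disjoint_left]
    rintro x hx1 hx2
    simp only [Finset.mem_image, Finset.mem_univ, true_and] at hx1 hx2
    obtain ⟨w1, rfl⟩ := hx1
    obtain ⟨w2, h2⟩ := hx2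
    have := congrArg (fun p : V r => (p.2 : ℕ)) h2
    simp [l0, lT] at this
    omega
  rw [outer, Finset.card_union_of_disjoint hdisj,
    Finset.card_image_of_injective _ (fun w1 w2 h => (Prod.mk.injEq _ _ _ _ ▸ h).1),
    Finset.card_image_of_injective _ (fun w1 w2 h => (Prod.mk.injEq _ _ _ _ ▸ h).1)]
  simp [Fintype.card_fun]
  ring

lemma col_ne {a b : Fin r → Bool} {i : Fin (2 * r + 1)}
    (h : ((a, i) : V r) ≠ (b, i)) : a ≠ b := fun hc => h (by rw [hc])

lemma outer_gp (hr : 1 ≤ r) : IsGenPos (BenesNetwork r) ((outer r : Finset (V r)) : Set (V r)) := by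
  intro u hu v hv w hw huv hvw huw
  simp only [Finset.mem_coe] at hu hv hw
  obtain ⟨a, iu⟩ := u
  obtain ⟨b, iv⟩ := v
  obtain ⟨c, iw⟩ := w
  have hu' := mem_outer.mp hu
  have hv' := mem_outer.mp hv
  have hw' := mem_outer.mp hw
  simp only at hu' hv' hw'
  have hcomm : ∀ (x y : Fin r → Bool),
      (BenesNetwork r).dist (x, lT r) (y, l0 r) = 2 * r := by
    intro x y
    rw [SimpleGraph.dist_comm]
    exact dist_opp y x
  rcases hu' with rfl | rfl <;> rcases hv' with rfl | rfl <;> rcases hw' with rfl | rfl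
  · -- 0 0 0
    have hab := col_ne huv
    have hbc := col_ne hvw
    have hac := col_ne huw
    rw [dist_zero hac, dist_zero hab, dist_zero hbc]
    have := M_tri (b := b) hac
    omega
  · -- 0 0 T
    have hab := col_ne huv
    rw [dist_opp a c, dist_zero hab, dist_opp b c]
    have := M_lt hab
    omega
  · -- 0 T 0
    have hac := col_ne huw
    rw [dist_zero hac, dist_opp a b, hcomm b c]
    have := M_lt hac
    omega
  · -- 0 T T
    have hbc := col_ne hvw
    rw [dist_opp a c, dist_opp a b, dist_T hbc]
    have := M_lt hbc
    omega
  · -- T 0 0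
    have hbc := col_ne hvw
    rw [hcomm a c, hcomm a b, dist_zero hbc]
    have := M_lt hbc
    omega
  · -- T 0 T
    have hac := col_ne huw
    rw [dist_T hac, hcomm a b, dist_opp b c]
    have := M_lt hac
    omega
  · -- T T 0
    have hab := col_ne huv
    rw [hcomm a c, dist_T hab, hcomm b c]
    have := M_lt hab
    omega
  · -- T T T
    have hab := col_ne huv
    have hbc := col_ne hvw
    have hac := col_ne huw
    rw [dist_T hac, dist_T hab, dist_T hbc]
    have := M_tri (b := b) hac
    omega

end BenesAux

/-- gp(BN(r)) = 2^{r+1}. -/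
theorem stmt_18 (r : ℕ) (hr : 1 ≤ r) :
    (∃ S : Finset ((Fin r → Bool) × Fin (2 * r + 1)),
      IsGenPos (BenesNetwork r) (S : Set ((Fin r → Bool) × Fin (2 * r + 1))) ∧
      S.card = 2 ^ (r + 1)) ∧
    (∀ S : Finset ((Fin r → Bool) × Fin (2 * r + 1)),
      IsGenPos (BenesNetwork r) (S : Set ((Fin r → Bool) × Fin (2 * r + 1))) →
      S.card ≤ 2 ^ (r + 1)) := by
  exact ⟨⟨BenesAux.outer r, BenesAux.outer_gp hr, BenesAux.outer_card hr⟩,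
    fun S hS => BenesAux.upper r S hS⟩
end
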